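/- Let G be a G-formula and let Γ be a multiset of D-formulas. If the sequent Γ → G has an I_G-proof (containing no occurrences of the ∨-L rule), then it has an O_G-proof. -/

import Mathlib

set_option maxHeartbeats 1000000

/-- Terms of a first-order language: variables (de Bruijn indices for
quantified variables) and constants. -/
inductive Tm : Type
  | var : ℕ → Tm
  | const : ℕ → Tm

namespace Tm

/-- Substitution of the term `u` for the variable with index `k`. -/
def subst (k : ℕ) (u : Tm) : Tm → Tm
  | var n => if n = k then u else var n
  | const c => const c

/-- The constant `c` occurs in a term. -/
def constIn (c : ℕ) : Tm → Prop
  | var _ => False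
  | const d => d = c

end Tm

/-- First-order formulas over the primitives ⊤, ⊥, ∧, ∨, ⊃, ∃, ∀.
Quantifiers are represented with de Bruijn indices. -/
inductive Fm : Type
  | top : Fm
  | bot : Fm
  | atom : ℕ → List Tm → Fm
  | conj : Fm → Fm → Fm
  | disj : Fm → Fm → Fm
  | imp : Fm → Fm → Fm
  | ex : Fm → Fm
  | all : Fm → Fm

namespace Fm

/-- Substitution of a term for the variable with de Bruijn index `k`. -/
def subst (k : ℕ) (u : Tm) : Fm → Fm
  | top => top
  | bot => bot
  | atom p ts => atom p (ts.map (Tm.subst k u))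
  | conj a b => conj (subst k u a) (subst k u b)
  | disj a b => disj (subst k u a) (subst k u b)
  | imp a b => imp (subst k u a) (subst k u b)
  | ex a => ex (subst (k + 1) u a)
  | all a => all (subst (k + 1) u a)

/-- `[t/x]B`: instantiation of the outermost bound variable of the body of a
quantified formula with the term `u`. -/
def inst (u : Tm) (a : Fm) : Fm := subst 0 u a

/-- Atomic formulas (⊤ and ⊥ are *not* atomic). -/
def isAtom : Fm → Prop
  | atom _ _ => True
  | _ => False

/-- Formulas that need no right-introduction rule in a uniform/O_G proof:
atomic formulas and ⊥. -/
def neutral (F : Fm) : Prop := F.isAtom ∨ F = bot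

/-- The constant `c` occurs in a formula. -/
def constIn (c : ℕ) : Fm → Prop
  | top => False
  | bot => False
  | atom _ ts => ∃ t ∈ ts, t.constIn c
  | conj a b => constIn c a ∨ constIn c b
  | disj a b => constIn c a ∨ constIn c b
  | imp a b => constIn c a ∨ constIn c b
  | ex a => constIn c a
  | all a => constIn c a

end Fm

/-- The eigenvariable (constant) `c` does not occur in the sequent `Γ → Δ`. -/
def FreshSeq (c : ℕ) (Γ Δ : Multiset Fm) : Prop :=
  (∀ F ∈ Γ, ¬ F.constIn c) ∧ ∀ F ∈ Δ, ¬ F.constIn c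

/-- The sequent `Γ → Δ` is an axiom: ⊤ ∈ Δ, or some `A` that is ⊥ or atomic
belongs to both `Γ` and `Δ`. -/
def AxSeq (Γ Δ : Multiset Fm) : Prop :=
  Fm.top ∈ Δ ∨ ∃ A : Fm, (A = Fm.bot ∨ A.isAtom) ∧ A ∈ Γ ∧ A ∈ Δ

/-- C-proofs: arbitrary derivations in the sequent calculus of the paper.
Sequents are pairs of multisets of formulas. -/
inductive CProof : Multiset Fm → Multiset Fm → Type
  | ax {Γ Δ : Multiset Fm} (h : AxSeq Γ Δ) : CProof Γ Δ
  | contrL {B : Fm} {Γ Δ : Multiset Fm} (p : CProof (B ::ₘ B ::ₘ Γ) Δ) : CProof (B ::ₘ Γ) Δ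
  | contrR {B : Fm} {Γ Δ : Multiset Fm} (p : CProof Γ (B ::ₘ B ::ₘ Δ)) : CProof Γ (B ::ₘ Δ)
  | botR {D : Fm} {Γ Δ : Multiset Fm} (p : CProof Γ (Fm.bot ::ₘ Δ)) : CProof Γ (D ::ₘ Δ)
  | andL {B D : Fm} {Γ Δ : Multiset Fm} (p : CProof (B ::ₘ D ::ₘ (B.conj D) ::ₘ Γ) Δ) :
      CProof ((B.conj D) ::ₘ Γ) Δ
  | andR {B D : Fm} {Γ Δ : Multiset Fm} (p : CProof Γ (B ::ₘ Δ)) (q : CProof Γ (D ::ₘ Δ)) :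
      CProof Γ ((B.conj D) ::ₘ Δ)
  | orL {B D : Fm} {Γ Δ : Multiset Fm} (p : CProof (B ::ₘ Γ) Δ) (q : CProof (D ::ₘ Γ) Δ) :
      CProof ((B.disj D) ::ₘ Γ) Δ
  | orR1 {B D : Fm} {Γ Δ : Multiset Fm} (p : CProof Γ (B ::ₘ Δ)) : CProof Γ ((B.disj D) ::ₘ Δ)
  | orR2 {B D : Fm} {Γ Δ : Multiset Fm} (p : CProof Γ (D ::ₘ Δ)) : CProof Γ ((B.disj D) ::ₘ Δ)
  | impL {B D : Fm} {Γ Δ Θ : Multiset Fm} (p : CProof ((B.imp D) ::ₘ Γ) (B ::ₘ Δ))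
      (q : CProof (D ::ₘ Γ) Θ) : CProof ((B.imp D) ::ₘ Γ) (Δ + Θ)
  | impR {B D : Fm} {Γ Δ : Multiset Fm} (p : CProof (B ::ₘ Γ) (D ::ₘ Δ)) :
      CProof Γ ((B.imp D) ::ₘ Δ)
  | allL {B : Fm} {Γ Δ : Multiset Fm} (t : Tm)
      (p : CProof ((B.inst t) ::ₘ (Fm.all B) ::ₘ Γ) Δ) : CProof ((Fm.all B) ::ₘ Γ) Δ
  | exR {B : Fm} {Γ Δ : Multiset Fm} (t : Tm) (p : CProof Γ ((B.inst t) ::ₘ Δ)) :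
      CProof Γ ((Fm.ex B) ::ₘ Δ)
  | exL {B : Fm} {Γ Δ : Multiset Fm} (c : ℕ) (hc : FreshSeq c ((Fm.ex B) ::ₘ Γ) Δ)
      (p : CProof ((B.inst (Tm.const c)) ::ₘ Γ) Δ) : CProof ((Fm.ex B) ::ₘ Γ) Δ
  | allR {B : Fm} {Γ Δ : Multiset Fm} (c : ℕ) (hc : FreshSeq c Γ ((Fm.all B) ::ₘ Δ))
      (p : CProof Γ ((B.inst (Tm.const c)) ::ₘ Δ)) : CProof Γ ((Fm.all B) ::ₘ Δ)

namespace CProof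

/-- An I-proof is a C-proof in which every sequent has exactly one formula in
its succedent. -/
def isI : ∀ (Γ Δ : Multiset Fm), CProof Γ Δ → Prop
  | _, _, @ax _ Δ _ => Multiset.card Δ = 1
  | _, _, @contrL _ _ Δ p => Multiset.card Δ = 1 ∧ isI _ _ p
  | _, _, @contrR B _ Δ p => Multiset.card (B ::ₘ Δ) = 1 ∧ isI _ _ p
  | _, _, @botR D _ Δ p => Multiset.card (D ::ₘ Δ) = 1 ∧ isI _ _ p
  | _, _, @andL _ _ _ Δ p => Multiset.card Δ = 1 ∧ isI _ _ p
  | _, _, @andR B D _ Δ p q => Multiset.card ((B.conj D) ::ₘ Δ) = 1 ∧ isI _ _ p ∧ isI _ _ q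
  | _, _, @orL _ _ _ Δ p q => Multiset.card Δ = 1 ∧ isI _ _ p ∧ isI _ _ q
  | _, _, @orR1 B D _ Δ p => Multiset.card ((B.disj D) ::ₘ Δ) = 1 ∧ isI _ _ p
  | _, _, @orR2 B D _ Δ p => Multiset.card ((B.disj D) ::ₘ Δ) = 1 ∧ isI _ _ p
  | _, _, @impL _ _ _ Δ Θ p q => Multiset.card (Δ + Θ) = 1 ∧ isI _ _ p ∧ isI _ _ q
  | _, _, @impR B D _ Δ p => Multiset.card ((B.imp D) ::ₘ Δ) = 1 ∧ isI _ _ p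
  | _, _, @allL _ _ Δ _ p => Multiset.card Δ = 1 ∧ isI _ _ p
  | _, _, @exR B _ Δ _ p => Multiset.card ((Fm.ex B) ::ₘ Δ) = 1 ∧ isI _ _ p
  | _, _, @exL _ _ Δ _ _ p => Multiset.card Δ = 1 ∧ isI _ _ p
  | _, _, @allR B _ Δ _ _ p => Multiset.card ((Fm.all B) ::ₘ Δ) = 1 ∧ isI _ _ p

end CProof

/-- Classical provability: `Γ ⊢_C F`. -/
def CProv (Γ : Multiset Fm) (F : Fm) : Prop := Nonempty (CProof Γ ({F} : Multiset Fm))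

/-- Intuitionistic provability: `Γ ⊢_I F`. -/
def IProv (Γ : Multiset Fm) (F : Fm) : Prop := ∃ p : CProof Γ ({F} : Multiset Fm), p.isI

namespace CProof

open Classical in
/-- The nonconstructiveness measure of a C-proof: the number of
nonconstructive occurrences of ∨-L and ⊃-R rules in it. -/
noncomputable def mu : ∀ (Γ Δ : Multiset Fm), CProof Γ Δ → ℕ
  | _, _, ax _ => 0
  | _, _, contrL p => mu _ _ p
  | _, _, contrR p => mu _ _ p
  | _, _, botR p => mu _ _ p
  | _, _, andL p => mu _ _ p
  | _, _, andR p q => mu _ _ p + mu _ _ q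
  | _, _, @orL B D Γ Δ p q =>
      mu _ _ p + mu _ _ q +
        (if ∃ F ∈ Δ, IProv (B ::ₘ Γ) F ∧ IProv (D ::ₘ Γ) F then 0 else 1)
  | _, _, orR1 p => mu _ _ p
  | _, _, orR2 p => mu _ _ p
  | _, _, impL p q => mu _ _ p + mu _ _ q
  | _, _, @impR B D Γ _ p => mu _ _ p + (if IProv (B ::ₘ Γ) D then 0 else 1)
  | _, _, allL _ p => mu _ _ p
  | _, _, exR _ p => mu _ _ p
  | _, _, exL _ _ p => mu _ _ p
  | _, _, allR _ _ p => mu _ _ p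

/-- The sequent `S → P` appears in the given C-proof. -/
def occursSeq : ∀ (Γ Δ : Multiset Fm), CProof Γ Δ → Multiset Fm → Multiset Fm → Prop
  | _, _, @ax Γ Δ _, S, P => Γ = S ∧ Δ = P
  | _, _, @contrL B Γ Δ p, S, P => ((B ::ₘ Γ) = S ∧ Δ = P) ∨ occursSeq _ _ p S P
  | _, _, @contrR B Γ Δ p, S, P => (Γ = S ∧ (B ::ₘ Δ) = P) ∨ occursSeq _ _ p S P
  | _, _, @botR D Γ Δ p, S, P => (Γ = S ∧ (D ::ₘ Δ) = P) ∨ occursSeq _ _ p S P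
  | _, _, @andL B D Γ Δ p, S, P => (((B.conj D) ::ₘ Γ) = S ∧ Δ = P) ∨ occursSeq _ _ p S P
  | _, _, @andR B D Γ Δ p q, S, P =>
      (Γ = S ∧ ((B.conj D) ::ₘ Δ) = P) ∨ occursSeq _ _ p S P ∨ occursSeq _ _ q S P
  | _, _, @orL B D Γ Δ p q, S, P =>
      (((B.disj D) ::ₘ Γ) = S ∧ Δ = P) ∨ occursSeq _ _ p S P ∨ occursSeq _ _ q S P
  | _, _, @orR1 B D Γ Δ p, S, P => (Γ = S ∧ ((B.disj D) ::ₘ Δ) = P) ∨ occursSeq _ _ p S P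
  | _, _, @orR2 B D Γ Δ p, S, P => (Γ = S ∧ ((B.disj D) ::ₘ Δ) = P) ∨ occursSeq _ _ p S P
  | _, _, @impL B D Γ Δ Θ p q, S, P =>
      (((B.imp D) ::ₘ Γ) = S ∧ (Δ + Θ) = P) ∨ occursSeq _ _ p S P ∨ occursSeq _ _ q S P
  | _, _, @impR B D Γ Δ p, S, P => (Γ = S ∧ ((B.imp D) ::ₘ Δ) = P) ∨ occursSeq _ _ p S P
  | _, _, @allL B Γ Δ _ p, S, P => (((Fm.all B) ::ₘ Γ) = S ∧ Δ = P) ∨ occursSeq _ _ p S P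
  | _, _, @exR B Γ Δ _ p, S, P => (Γ = S ∧ ((Fm.ex B) ::ₘ Δ) = P) ∨ occursSeq _ _ p S P
  | _, _, @exL B Γ Δ _ _ p, S, P => (((Fm.ex B) ::ₘ Γ) = S ∧ Δ = P) ∨ occursSeq _ _ p S P
  | _, _, @allR B Γ Δ _ _ p, S, P => (Γ = S ∧ ((Fm.all B) ::ₘ Δ) = P) ∨ occursSeq _ _ p S P

/-- `hasImpR p B S P D` holds when an ⊃-R rule with upper sequent
`B,S → P,D` and lower sequent `S → P,B⊃D` occurs in the proof `p`. -/
def hasImpR : ∀ (Γ Δ : Multiset Fm), CProof Γ Δ → Fm → Multiset Fm → Multiset Fm → Fm → Prop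
  | _, _, ax _, _, _, _, _ => False
  | _, _, contrL p, B, S, P, D => hasImpR _ _ p B S P D
  | _, _, contrR p, B, S, P, D => hasImpR _ _ p B S P D
  | _, _, botR p, B, S, P, D => hasImpR _ _ p B S P D
  | _, _, andL p, B, S, P, D => hasImpR _ _ p B S P D
  | _, _, andR p q, B, S, P, D => hasImpR _ _ p B S P D ∨ hasImpR _ _ q B S P D
  | _, _, orL p q, B, S, P, D => hasImpR _ _ p B S P D ∨ hasImpR _ _ q B S P D
  | _, _, orR1 p, B, S, P, D => hasImpR _ _ p B S P D
  | _, _, orR2 p, B, S, P, D => hasImpR _ _ p B S P D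
  | _, _, impL p q, B, S, P, D => hasImpR _ _ p B S P D ∨ hasImpR _ _ q B S P D
  | _, _, @impR B' D' Γ' Δ' p, B, S, P, D =>
      (B' = B ∧ Γ' = S ∧ Δ' = P ∧ D' = D) ∨ hasImpR _ _ p B S P D
  | _, _, allL _ p, B, S, P, D => hasImpR _ _ p B S P D
  | _, _, exR _ p, B, S, P, D => hasImpR _ _ p B S P D
  | _, _, exL _ _ p, B, S, P, D => hasImpR _ _ p B S P D
  | _, _, allR _ _ p, B, S, P, D => hasImpR _ _ p B S P D

/-- `hasOrL p B D S P` holds when an ∨-L rule with upper sequents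
`B,S → P` and `D,S → P` and lower sequent `B∨D,S → P` occurs in `p`. -/
def hasOrL : ∀ (Γ Δ : Multiset Fm), CProof Γ Δ → Fm → Fm → Multiset Fm → Multiset Fm → Prop
  | _, _, ax _, _, _, _, _ => False
  | _, _, contrL p, B, D, S, P => hasOrL _ _ p B D S P
  | _, _, contrR p, B, D, S, P => hasOrL _ _ p B D S P
  | _, _, botR p, B, D, S, P => hasOrL _ _ p B D S P
  | _, _, andL p, B, D, S, P => hasOrL _ _ p B D S P
  | _, _, andR p q, B, D, S, P => hasOrL _ _ p B D S P ∨ hasOrL _ _ q B D S P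
  | _, _, @orL B' D' Γ' Δ' p q, B, D, S, P =>
      (B' = B ∧ D' = D ∧ Γ' = S ∧ Δ' = P) ∨ hasOrL _ _ p B D S P ∨ hasOrL _ _ q B D S P
  | _, _, orR1 p, B, D, S, P => hasOrL _ _ p B D S P
  | _, _, orR2 p, B, D, S, P => hasOrL _ _ p B D S P
  | _, _, impL p q, B, D, S, P => hasOrL _ _ p B D S P ∨ hasOrL _ _ q B D S P
  | _, _, impR p, B, D, S, P => hasOrL _ _ p B D S P
  | _, _, allL _ p, B, D, S, P => hasOrL _ _ p B D S P
  | _, _, exR _ p, B, D, S, P => hasOrL _ _ p B D S P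
  | _, _, exL _ _ p, B, D, S, P => hasOrL _ _ p B D S P
  | _, _, allR _ _ p, B, D, S, P => hasOrL _ _ p B D S P

/-- Every formula in `Δ` is atomic or ⊥. -/
def neutralM (Δ : Multiset Fm) : Prop := ∀ F ∈ Δ, F.neutral

/-- A uniform proof: an I-proof in which any sequent whose succedent contains
a non-atomic formula occurs only as the lower sequent of an inference rule
that introduces the top-level logical symbol of that formula. -/
def isUniform : ∀ (Γ Δ : Multiset Fm), CProof Γ Δ → Prop
  | _, _, @ax _ Δ _ => Multiset.card Δ = 1
  | _, _, @contrL _ _ Δ p => Multiset.card Δ = 1 ∧ neutralM Δ ∧ isUniform _ _ p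
  | _, _, @contrR B _ Δ p =>
      Multiset.card (B ::ₘ Δ) = 1 ∧ neutralM (B ::ₘ Δ) ∧ isUniform _ _ p
  | _, _, @botR D _ Δ p =>
      Multiset.card (D ::ₘ Δ) = 1 ∧ neutralM (D ::ₘ Δ) ∧ isUniform _ _ p
  | _, _, @andL _ _ _ Δ p => Multiset.card Δ = 1 ∧ neutralM Δ ∧ isUniform _ _ p
  | _, _, @andR B D _ Δ p q =>
      Multiset.card ((B.conj D) ::ₘ Δ) = 1 ∧ isUniform _ _ p ∧ isUniform _ _ q
  | _, _, @orL _ _ _ Δ p q =>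
      Multiset.card Δ = 1 ∧ neutralM Δ ∧ isUniform _ _ p ∧ isUniform _ _ q
  | _, _, @orR1 B D _ Δ p => Multiset.card ((B.disj D) ::ₘ Δ) = 1 ∧ isUniform _ _ p
  | _, _, @orR2 B D _ Δ p => Multiset.card ((B.disj D) ::ₘ Δ) = 1 ∧ isUniform _ _ p
  | _, _, @impL _ _ _ Δ Θ p q =>
      Multiset.card (Δ + Θ) = 1 ∧ neutralM (Δ + Θ) ∧ isUniform _ _ p ∧ isUniform _ _ q
  | _, _, @impR B D _ Δ p => Multiset.card ((B.imp D) ::ₘ Δ) = 1 ∧ isUniform _ _ p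
  | _, _, @allL _ _ Δ _ p => Multiset.card Δ = 1 ∧ neutralM Δ ∧ isUniform _ _ p
  | _, _, @exR B _ Δ _ p => Multiset.card ((Fm.ex B) ::ₘ Δ) = 1 ∧ isUniform _ _ p
  | _, _, @exL _ _ Δ _ _ p => Multiset.card Δ = 1 ∧ neutralM Δ ∧ isUniform _ _ p
  | _, _, @allR B _ Δ _ _ p => Multiset.card ((Fm.all B) ::ₘ Δ) = 1 ∧ isUniform _ _ p

end CProof

/-- Uniform provability: `Γ ⊢_O F`. -/
def UProv (Γ : Multiset Fm) (F : Fm) : Prop :=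
  ∃ p : CProof Γ ({F} : Multiset Fm), p.isUniform

/-- The ordering ⪰ measuring the strength of formulas as assumptions. -/
inductive Fm.ge : Fm → Fm → Prop
  | refl (F : Fm) : Fm.ge F F
  | imp {F A B : Fm} : Fm.ge F B → Fm.ge F (Fm.imp A B)
  | disjl {F A B : Fm} : Fm.ge F A → Fm.ge F (Fm.disj A B)
  | disjr {F A B : Fm} : Fm.ge F B → Fm.ge F (Fm.disj A B)
  | ex {F P : Fm} (c : ℕ) : Fm.ge F (P.inst (Tm.const c)) → Fm.ge F (Fm.ex P)

/-- `MsGe Γ₁ Γ₂`: there is an injective map κ from `Γ₂` into `Γ₁` with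
`κ(F) ⪰ F` for every `F ∈ Γ₂`. -/
def MsGe (Γ₁ Γ₂ : Multiset Fm) : Prop :=
  ∃ Γ' ≤ Γ₁, Multiset.Rel Fm.ge Γ' Γ₂

mutual
  /-- G-formulas: G ::= ⊤ | ⊥ | A | G∧G | G∨G | D⊃G | ∃x G. -/
  inductive GFm : Fm → Prop
    | top : GFm Fm.top
    | bot : GFm Fm.bot
    | atom {p : ℕ} {ts : List Tm} : GFm (Fm.atom p ts)
    | conj {a b : Fm} : GFm a → GFm b → GFm (Fm.conj a b)
    | disj {a b : Fm} : GFm a → GFm b → GFm (Fm.disj a b)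
    | imp {a b : Fm} : DFm a → GFm b → GFm (Fm.imp a b)
    | ex {a : Fm} : GFm a → GFm (Fm.ex a)

  /-- D-formulas: D ::= ⊤ | ⊥ | A | G⊃D | D∧D | D∨D | ∃x D | ∀x D. -/
  inductive DFm : Fm → Prop
    | top : DFm Fm.top
    | bot : DFm Fm.bot
    | atom {p : ℕ} {ts : List Tm} : DFm (Fm.atom p ts)
    | imp {a b : Fm} : GFm a → DFm b → DFm (Fm.imp a b)
    | conj {a b : Fm} : DFm a → DFm b → DFm (Fm.conj a b)
    | disj {a b : Fm} : DFm a → DFm b → DFm (Fm.disj a b)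
    | ex {a : Fm} : DFm a → DFm (Fm.ex a)
    | all {a : Fm} : DFm a → DFm (Fm.all a)
end
/-- I_G-proofs: derivations in the intuitionistic sequent calculus (single
succedent formula) augmented with the derived rules ∨-L_G and res_G, in which
the eigenvariable proviso on ∃-L and ∀-R also disallows constants in `G`. -/
inductive IGProof (G : Fm) : Multiset Fm → Fm → Type
  | ax {Γ : Multiset Fm} {F : Fm} (h : AxSeq Γ ({F} : Multiset Fm)) : IGProof G Γ F
  | contrL {B : Fm} {Γ : Multiset Fm} {F : Fm} (p : IGProof G (B ::ₘ B ::ₘ Γ) F) :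
      IGProof G (B ::ₘ Γ) F
  | botR {Γ : Multiset Fm} {F : Fm} (p : IGProof G Γ Fm.bot) : IGProof G Γ F
  | andL {B D : Fm} {Γ : Multiset Fm} {F : Fm}
      (p : IGProof G (B ::ₘ D ::ₘ (B.conj D) ::ₘ Γ) F) : IGProof G ((B.conj D) ::ₘ Γ) F
  | andR {B D : Fm} {Γ : Multiset Fm} (p : IGProof G Γ B) (q : IGProof G Γ D) :
      IGProof G Γ (B.conj D)
  | orL {B D : Fm} {Γ : Multiset Fm} {F : Fm} (p : IGProof G (B ::ₘ Γ) F)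
      (q : IGProof G (D ::ₘ Γ) F) : IGProof G ((B.disj D) ::ₘ Γ) F
  | orR1 {B D : Fm} {Γ : Multiset Fm} (p : IGProof G Γ B) : IGProof G Γ (B.disj D)
  | orR2 {B D : Fm} {Γ : Multiset Fm} (p : IGProof G Γ D) : IGProof G Γ (B.disj D)
  | impL {B D : Fm} {Γ : Multiset Fm} {F : Fm} (p : IGProof G ((B.imp D) ::ₘ Γ) B)
      (q : IGProof G (D ::ₘ Γ) F) : IGProof G ((B.imp D) ::ₘ Γ) F
  | impR {B D : Fm} {Γ : Multiset Fm} (p : IGProof G (B ::ₘ Γ) D) : IGProof G Γ (B.imp D)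
  | allL {B : Fm} {Γ : Multiset Fm} {F : Fm} (t : Tm)
      (p : IGProof G ((B.inst t) ::ₘ (Fm.all B) ::ₘ Γ) F) : IGProof G ((Fm.all B) ::ₘ Γ) F
  | exR {B : Fm} {Γ : Multiset Fm} (t : Tm) (p : IGProof G Γ (B.inst t)) :
      IGProof G Γ (Fm.ex B)
  | exL {B : Fm} {Γ : Multiset Fm} {F : Fm} (c : ℕ)
      (hc : FreshSeq c ((Fm.ex B) ::ₘ Γ) ({F} : Multiset Fm)) (hG : ¬ G.constIn c)
      (p : IGProof G ((B.inst (Tm.const c)) ::ₘ Γ) F) : IGProof G ((Fm.ex B) ::ₘ Γ) F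
  | allR {B : Fm} {Γ : Multiset Fm} (c : ℕ)
      (hc : FreshSeq c Γ ({Fm.all B} : Multiset Fm)) (hG : ¬ G.constIn c)
      (p : IGProof G Γ (B.inst (Tm.const c))) : IGProof G Γ (Fm.all B)
  | orLG {B D : Fm} {Γ : Multiset Fm} {F : Fm} (p : IGProof G (B ::ₘ Γ) F)
      (q : IGProof G (D ::ₘ Γ) G) : IGProof G ((B.disj D) ::ₘ Γ) F
  | resG {Γ : Multiset Fm} {F : Fm} (p : IGProof G Γ G) : IGProof G Γ F

namespace IGProof

/-- The number of occurrences of the ∨-L rule in an I_G-proof. -/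
def orLCount : ∀ (G : Fm) (Γ : Multiset Fm) (F : Fm), IGProof G Γ F → ℕ
  | _, _, _, ax _ => 0
  | _, _, _, contrL p => orLCount _ _ _ p
  | _, _, _, botR p => orLCount _ _ _ p
  | _, _, _, andL p => orLCount _ _ _ p
  | _, _, _, andR p q => orLCount _ _ _ p + orLCount _ _ _ q
  | _, _, _, orL p q => orLCount _ _ _ p + orLCount _ _ _ q + 1
  | _, _, _, orR1 p => orLCount _ _ _ p
  | _, _, _, orR2 p => orLCount _ _ _ p
  | _, _, _, impL p q => orLCount _ _ _ p + orLCount _ _ _ q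
  | _, _, _, impR p => orLCount _ _ _ p
  | _, _, _, allL _ p => orLCount _ _ _ p
  | _, _, _, exR _ p => orLCount _ _ _ p
  | _, _, _, exL _ _ _ p => orLCount _ _ _ p
  | _, _, _, allR _ _ _ p => orLCount _ _ _ p
  | _, _, _, orLG p q => orLCount _ _ _ p + orLCount _ _ _ q
  | _, _, _, resG p => orLCount _ _ _ p

/-- The height of an I_G-proof: the length of its longest branch. -/
def height : ∀ (G : Fm) (Γ : Multiset Fm) (F : Fm), IGProof G Γ F → ℕ
  | _, _, _, ax _ => 1
  | _, _, _, contrL p => height _ _ _ p + 1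
  | _, _, _, botR p => height _ _ _ p + 1
  | _, _, _, andL p => height _ _ _ p + 1
  | _, _, _, andR p q => max (height _ _ _ p) (height _ _ _ q) + 1
  | _, _, _, orL p q => max (height _ _ _ p) (height _ _ _ q) + 1
  | _, _, _, orR1 p => height _ _ _ p + 1
  | _, _, _, orR2 p => height _ _ _ p + 1
  | _, _, _, impL p q => max (height _ _ _ p) (height _ _ _ q) + 1
  | _, _, _, impR p => height _ _ _ p + 1
  | _, _, _, allL _ p => height _ _ _ p + 1
  | _, _, _, exR _ p => height _ _ _ p + 1
  | _, _, _, exL _ _ _ p => height _ _ _ p + 1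
  | _, _, _, allR _ _ _ p => height _ _ _ p + 1
  | _, _, _, orLG p q => max (height _ _ _ p) (height _ _ _ q) + 1
  | _, _, _, resG p => height _ _ _ p + 1

/-- The number of sequents appearing in an I_G-proof. -/
def size : ∀ (G : Fm) (Γ : Multiset Fm) (F : Fm), IGProof G Γ F → ℕ
  | _, _, _, ax _ => 1
  | _, _, _, contrL p => size _ _ _ p + 1
  | _, _, _, botR p => size _ _ _ p + 1
  | _, _, _, andL p => size _ _ _ p + 1
  | _, _, _, andR p q => size _ _ _ p + size _ _ _ q + 1
  | _, _, _, orL p q => size _ _ _ p + size _ _ _ q + 1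
  | _, _, _, orR1 p => size _ _ _ p + 1
  | _, _, _, orR2 p => size _ _ _ p + 1
  | _, _, _, impL p q => size _ _ _ p + size _ _ _ q + 1
  | _, _, _, impR p => size _ _ _ p + 1
  | _, _, _, allL _ p => size _ _ _ p + 1
  | _, _, _, exR _ p => size _ _ _ p + 1
  | _, _, _, exL _ _ _ p => size _ _ _ p + 1
  | _, _, _, allR _ _ _ p => size _ _ _ p + 1
  | _, _, _, orLG p q => size _ _ _ p + size _ _ _ q + 1
  | _, _, _, resG p => size _ _ _ p + 1

/-- O_G-proofs: I_G-proofs containing no occurrence of the ∨-L rule, in which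
any sequent whose succedent contains a non-atomic formula occurs only as the
lower sequent of a rule introducing the top-level symbol of that formula. -/
def isOG : ∀ (G : Fm) (Γ : Multiset Fm) (F : Fm), IGProof G Γ F → Prop
  | _, _, _, ax _ => True
  | _, _, _, @contrL _ _ _ F p => F.neutral ∧ isOG _ _ _ p
  | _, _, _, @botR _ _ F p => F.neutral ∧ isOG _ _ _ p
  | _, _, _, @andL _ _ _ _ F p => F.neutral ∧ isOG _ _ _ p
  | _, _, _, andR p q => isOG _ _ _ p ∧ isOG _ _ _ q
  | _, _, _, orL _ _ => False
  | _, _, _, orR1 p => isOG _ _ _ p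
  | _, _, _, orR2 p => isOG _ _ _ p
  | _, _, _, @impL _ _ _ _ F p q => F.neutral ∧ isOG _ _ _ p ∧ isOG _ _ _ q
  | _, _, _, impR p => isOG _ _ _ p
  | _, _, _, @allL _ _ _ F _ p => F.neutral ∧ isOG _ _ _ p
  | _, _, _, exR _ p => isOG _ _ _ p
  | _, _, _, @exL _ _ _ F _ _ _ p => F.neutral ∧ isOG _ _ _ p
  | _, _, _, allR _ _ _ p => isOG _ _ _ p
  | _, _, _, @orLG _ _ _ _ F p q => F.neutral ∧ isOG _ _ _ p ∧ isOG _ _ _ q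
  | _, _, _, @resG _ _ F p => F.neutral ∧ isOG _ _ _ p

/-- `hasOrL p B D S F` holds when an ∨-L rule with upper sequents `B,S → F`
and `D,S → F` and lower sequent `B∨D,S → F` occurs in the I_G-proof `p`. -/
def hasOrL : ∀ (G : Fm) (Γ : Multiset Fm) (W : Fm), IGProof G Γ W →
    Fm → Fm → Multiset Fm → Fm → Prop
  | _, _, _, ax _, _, _, _, _ => False
  | _, _, _, contrL p, B, D, S, F => hasOrL _ _ _ p B D S F
  | _, _, _, botR p, B, D, S, F => hasOrL _ _ _ p B D S F
  | _, _, _, andL p, B, D, S, F => hasOrL _ _ _ p B D S F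
  | _, _, _, andR p q, B, D, S, F => hasOrL _ _ _ p B D S F ∨ hasOrL _ _ _ q B D S F
  | _, _, _, @orL _ B' D' Γ' F' p q, B, D, S, F =>
      (B' = B ∧ D' = D ∧ Γ' = S ∧ F' = F) ∨ hasOrL _ _ _ p B D S F ∨ hasOrL _ _ _ q B D S F
  | _, _, _, orR1 p, B, D, S, F => hasOrL _ _ _ p B D S F
  | _, _, _, orR2 p, B, D, S, F => hasOrL _ _ _ p B D S F
  | _, _, _, impL p q, B, D, S, F => hasOrL _ _ _ p B D S F ∨ hasOrL _ _ _ q B D S F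
  | _, _, _, impR p, B, D, S, F => hasOrL _ _ _ p B D S F
  | _, _, _, allL _ p, B, D, S, F => hasOrL _ _ _ p B D S F
  | _, _, _, exR _ p, B, D, S, F => hasOrL _ _ _ p B D S F
  | _, _, _, exL _ _ _ p, B, D, S, F => hasOrL _ _ _ p B D S F
  | _, _, _, allR _ _ _ p, B, D, S, F => hasOrL _ _ _ p B D S F
  | _, _, _, orLG p q, B, D, S, F => hasOrL _ _ _ p B D S F ∨ hasOrL _ _ _ q B D S F
  | _, _, _, resG p, B, D, S, F => hasOrL _ _ _ p B D S F

end IGProof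

/-- In the simplified syntax, `A` ranges over atomic formulas together with
⊤ and ⊥. -/
def AtFm (F : Fm) : Prop := F.isAtom ∨ F = Fm.top ∨ F = Fm.bot

/-- `disjs A [B₁,…,Bₙ]` is the disjunction `A ∨ B₁ ∨ … ∨ Bₙ`. -/
def disjs (A : Fm) : List Fm → Fm
  | [] => A
  | B :: l => Fm.disj A (disjs B l)

mutual
  /-- Goals in the simplified syntax: G ::= A | G∧G | G∨G | D⊃G | ∃x G. -/
  inductive Goal : Fm → Prop
    | atm {A : Fm} : AtFm A → Goal A
    | conj {a b : Fm} : Goal a → Goal b → Goal (Fm.conj a b)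
    | disj {a b : Fm} : Goal a → Goal b → Goal (Fm.disj a b)
    | imp {a b : Fm} : PCl a → Goal b → Goal (Fm.imp a b)
    | ex {a : Fm} : Goal a → Goal (Fm.ex a)

  /-- Program clauses in the simplified syntax:
  D ::= (A∨…∨A) | G⊃(A∨…∨A) | ∀x D. -/
  inductive PCl : Fm → Prop
    | head {A : Fm} {l : List Fm} : AtFm A → (∀ B ∈ l, AtFm B) → PCl (disjs A l)
    | impHead {g A : Fm} {l : List Fm} : Goal g → AtFm A → (∀ B ∈ l, AtFm B) →
        PCl (Fm.imp g (disjs A l))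
    | all {d : Fm} : PCl d → PCl (Fm.all d)
end

/-- The instances `[D]` of a program clause `D`, as pairs whose first
component is `∅` (`none`) or `{G}` (`some G`) and whose second component is
the collection of head atoms. -/
inductive ClInst : Fm → Option Fm → Multiset Fm → Prop
  | head {A : Fm} {l : List Fm} : AtFm A → (∀ B ∈ l, AtFm B) →
      ClInst (disjs A l) none (A ::ₘ (l : Multiset Fm))
  | impHead {g A : Fm} {l : List Fm} : Goal g → AtFm A → (∀ B ∈ l, AtFm B) →
      ClInst (Fm.imp g (disjs A l)) (some g) (A ::ₘ (l : Multiset Fm))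
  | all {d : Fm} {o : Option Fm} {m : Multiset Fm} (t : Tm) :
      ClInst (d.inst t) o m → ClInst (Fm.all d) o m

/-- `[Γ]`: the instances of the clauses in `Γ`. -/
def GammaInst (Γ : Multiset Fm) (o : Option Fm) (m : Multiset Fm) : Prop :=
  ∃ D ∈ Γ, ClInst D o m

/-- The reduced proof system relative to the goal `G`: axioms `Δ → ⊤`, the
rules RESTART, ATOMIC and BACKCHAIN relativized to `G`, and ∨-R, ∧-R, ⊃-R
and ∃-R. -/
inductive RP (G : Fm) : Multiset Fm → Fm → Prop
  | topAx {Γ : Multiset Fm} : RP G Γ Fm.top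
  | restart {Γ : Multiset Fm} {C : Fm} (hC : C.isAtom ∨ C = Fm.bot) (p : RP G Γ G) :
      RP G Γ C
  | atomic {Γ : Multiset Fm} {C : Fm} {m : Multiset Fm} (hC : C.isAtom ∨ C = Fm.bot)
      (h : GammaInst Γ none (C ::ₘ m) ∨ GammaInst Γ none (Fm.bot ::ₘ m))
      (ps : ∀ A ∈ m, RP G (A ::ₘ Γ) G) : RP G Γ C
  | backchain {Γ : Multiset Fm} {C G' : Fm} {m : Multiset Fm}
      (hC : C.isAtom ∨ C = Fm.bot)
      (h : GammaInst Γ (some G') (C ::ₘ m) ∨ GammaInst Γ (some G') (Fm.bot ::ₘ m))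
      (p : RP G Γ G') (ps : ∀ A ∈ m, RP G (A ::ₘ Γ) G) : RP G Γ C
  | orR1 {Γ : Multiset Fm} {B D : Fm} (p : RP G Γ B) : RP G Γ (B.disj D)
  | orR2 {Γ : Multiset Fm} {B D : Fm} (p : RP G Γ D) : RP G Γ (B.disj D)
  | andR {Γ : Multiset Fm} {B D : Fm} (p : RP G Γ B) (q : RP G Γ D) : RP G Γ (B.conj D)
  | impR {Γ : Multiset Fm} {B D : Fm} (p : RP G (B ::ₘ Γ) D) : RP G Γ (B.imp D)
  | exR {Γ : Multiset Fm} {B : Fm} (t : Tm) (p : RP G Γ (B.inst t)) : RP G Γ (Fm.ex B)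


/-! ### Auxiliary machinery for the proof of Statement 15 -/

namespace Tm

/-- Constants occurring in a term, as a finset. -/
def consts : Tm → Finset ℕ
  | var _ => ∅
  | const c => {c}

lemma constIn_iff_mem (c : ℕ) (t : Tm) : t.constIn c ↔ c ∈ t.consts := by
  cases t <;> simp [constIn, consts, eq_comm]

/-- Renaming of the constant `c` to `c'`. -/
def ren (c c' : ℕ) : Tm → Tm
  | var n => var n
  | const d => const (if d = c then c' else d)

lemma ren_subst (c c' k : ℕ) (u t : Tm) :
    ren c c' (subst k u t) = subst k (ren c c' u) (ren c c' t) := by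
  cases t with
  | var n => by_cases h : n = k <;> simp [subst, ren, h]
  | const d => simp [subst, ren]

lemma ren_eq_self {c : ℕ} (c' : ℕ) {t : Tm} (h : c ∉ t.consts) : ren c c' t = t := by
  cases t with
  | var n => rfl
  | const d =>
      simp [consts] at h
      simp [ren, Ne.symm h]

lemma mem_consts_ren {d c c' : ℕ} {t : Tm} (h : d ∈ (ren c c' t).consts) :
    d = c' ∨ d ∈ t.consts := by
  cases t with
  | var n => simp [ren, consts] at h
  | const e =>
      simp [ren, consts] at h ⊢
      split at h <;> simp_all

end Tm

namespace Fm

/-- A size measure on formulas, invariant under substitution. -/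
def sizeF : Fm → ℕ
  | top => 1
  | bot => 1
  | atom _ _ => 1
  | conj a b => sizeF a + sizeF b + 1
  | disj a b => sizeF a + sizeF b + 1
  | imp a b => sizeF a + sizeF b + 1
  | ex a => sizeF a + 1
  | all a => sizeF a + 1

lemma sizeF_subst (k : ℕ) (u : Tm) (a : Fm) : sizeF (subst k u a) = sizeF a := by
  induction a generalizing k <;> simp [subst, sizeF, *]

lemma sizeF_inst (u : Tm) (a : Fm) : sizeF (inst u a) = sizeF a := sizeF_subst 0 u a

lemma sizeF_pos (a : Fm) : 1 ≤ sizeF a := by cases a <;> simp [sizeF]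

/-- Constants occurring in a formula. -/
def consts : Fm → Finset ℕ
  | top => ∅
  | bot => ∅
  | atom _ ts => ts.foldr (fun t s => t.consts ∪ s) ∅
  | conj a b => consts a ∪ consts b
  | disj a b => consts a ∪ consts b
  | imp a b => consts a ∪ consts b
  | ex a => consts a
  | all a => consts a

lemma mem_foldr_consts (c : ℕ) (ts : List Tm) :
    c ∈ ts.foldr (fun t s => t.consts ∪ s) ∅ ↔ ∃ t ∈ ts, c ∈ t.consts := by
  induction ts with
  | nil => simp
  | cons t ts ih => simp [List.foldr, ih]

lemma constIn_iff_mem (c : ℕ) (F : Fm) : F.constIn c ↔ c ∈ F.consts := by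
  induction F with
  | atom p ts => simp [constIn, consts, mem_foldr_consts, Tm.constIn_iff_mem]
  | _ => simp [constIn, consts, *]

/-- Renaming of the constant `c` to `c'` in a formula. -/
def ren (c c' : ℕ) : Fm → Fm
  | top => top
  | bot => bot
  | atom p ts => atom p (ts.map (Tm.ren c c'))
  | conj a b => conj (ren c c' a) (ren c c' b)
  | disj a b => disj (ren c c' a) (ren c c' b)
  | imp a b => imp (ren c c' a) (ren c c' b)
  | ex a => ex (ren c c' a)
  | all a => all (ren c c' a)

lemma ren_subst (c c' k : ℕ) (u : Tm) (a : Fm) :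
    ren c c' (subst k u a) = subst k (Tm.ren c c' u) (ren c c' a) := by
  induction a generalizing k with
  | atom p ts => simp [subst, ren, List.map_map, Function.comp, Tm.ren_subst]
  | _ => simp [subst, ren, *]

lemma ren_inst (c c' : ℕ) (u : Tm) (a : Fm) :
    ren c c' (inst u a) = inst (Tm.ren c c' u) (ren c c' a) := ren_subst c c' 0 u a

lemma ren_eq_self {c : ℕ} (c' : ℕ) {a : Fm} (h : c ∉ a.consts) : ren c c' a = a := by
  induction a with
  | top => rfl
  | bot => rfl
  | atom p ts =>
      simp only [consts, mem_foldr_consts, not_exists] at h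
      push_neg at h
      simp only [ren, atom.injEq, true_and]
      conv_rhs => rw [← List.map_id ts]
      apply List.map_congr_left
      intro t ht
      exact Tm.ren_eq_self c' (h t ht)
  | conj a b iha ihb =>
      simp only [consts, Finset.mem_union] at h; push_neg at h
      simp [ren, iha h.1, ihb h.2]
  | disj a b iha ihb =>
      simp only [consts, Finset.mem_union] at h; push_neg at h
      simp [ren, iha h.1, ihb h.2]
  | imp a b iha ihb =>
      simp only [consts, Finset.mem_union] at h; push_neg at h
      simp [ren, iha h.1, ihb h.2]
  | ex a iha => simp only [consts] at h; simp [ren, iha h]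
  | all a iha => simp only [consts] at h; simp [ren, iha h]

lemma mem_consts_ren {d c c' : ℕ} {a : Fm} (h : d ∈ (ren c c' a).consts) :
    d = c' ∨ d ∈ a.consts := by
  induction a with
  | atom p ts =>
      simp only [ren, consts] at h ⊢
      induction ts with
      | nil => simp at h
      | cons s ss ih =>
          simp only [List.map, List.foldr, Finset.mem_union] at h ⊢
          rcases h with h | h
          · rcases Tm.mem_consts_ren h with h | h
            · exact Or.inl h
            · exact Or.inr (Or.inl h)
          · rcases ih h with h | h
            · exact Or.inl h
            · exact Or.inr (Or.inr h)
  | _ => simp only [ren, consts, Finset.mem_union] at h ⊢ <;> tauto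

lemma not_constIn_ren {e c c' : ℕ} {a : Fm} (h1 : ¬ a.constIn e) (h2 : e ≠ c') :
    ¬ (ren c c' a).constIn e := by
  rw [constIn_iff_mem] at h1 ⊢
  intro h
  rcases mem_consts_ren h with h | h
  · exact h2 h
  · exact h1 h

end Fm

noncomputable instance : DecidableEq Tm := Classical.decEq _
noncomputable instance : DecidableEq Fm := Classical.decEq _

/-- All constants occurring in a multiset of formulas. -/
def MC (Γ : Multiset Fm) : Finset ℕ := (Γ.map Fm.consts).sup

lemma consts_le_MC {Γ : Multiset Fm} {X : Fm} (h : X ∈ Γ) : X.consts ⊆ MC Γ := by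
  have : X.consts ≤ (Γ.map Fm.consts).sup := Multiset.le_sup (Multiset.mem_map_of_mem _ h)
  exact this

lemma not_constIn_of_notMem_MC {Γ : Multiset Fm} {X : Fm} {c : ℕ} (h : X ∈ Γ)
    (hc : c ∉ MC Γ) : ¬ X.constIn c := by
  rw [Fm.constIn_iff_mem]
  intro hmem
  exact hc (consts_le_MC h hmem)

/-- A fresh constant avoiding the finite set `S`. -/
def freshC (S : Finset ℕ) : ℕ := S.sup id + 1

lemma freshC_notMem (S : Finset ℕ) : freshC S ∉ S := by
  intro h
  have : id (S.sup id + 1) ≤ S.sup id := Finset.le_sup h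
  simp only [id] at this
  omega

lemma map_ren_eq_self {c : ℕ} (c' : ℕ) {Γ : Multiset Fm} (h : ∀ X ∈ Γ, ¬ X.constIn c) :
    Γ.map (Fm.ren c c') = Γ := by
  have : Γ.map (Fm.ren c c') = Γ.map id := by
    apply Multiset.map_congr rfl
    intro X hX
    apply Fm.ren_eq_self c'
    rw [← Fm.constIn_iff_mem]
    exact h X hX
  simpa using this

/-- Transitivity of the strength ordering. -/
lemma Fm.ge_trans {X Y Z : Fm} (h1 : Fm.ge X Y) (h2 : Fm.ge Y Z) : Fm.ge X Z := by
  induction h2 with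
  | refl => exact h1
  | imp _ ih => exact Fm.ge.imp ih
  | disjl _ ih => exact Fm.ge.disjl ih
  | disjr _ ih => exact Fm.ge.disjr ih
  | ex c _ ih => exact Fm.ge.ex c ih

lemma Fm.ge_neutral {X A : Fm} (h : Fm.ge X A) (hA : A.neutral) : X = A := by
  cases h with
  | refl => rfl
  | imp _ => rcases hA with h | h <;> simp [Fm.isAtom] at h
  | disjl _ => rcases hA with h | h <;> simp [Fm.isAtom] at h
  | disjr _ => rcases hA with h | h <;> simp [Fm.isAtom] at h
  | ex _ _ => rcases hA with h | h <;> simp [Fm.isAtom] at h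

lemma Fm.ge_conj {X a b : Fm} (h : Fm.ge X (Fm.conj a b)) : X = Fm.conj a b := by
  cases h; rfl

lemma Fm.ge_all {X a : Fm} (h : Fm.ge X (Fm.all a)) : X = Fm.all a := by
  cases h; rfl

lemma Fm.ge_imp {X a b : Fm} (h : Fm.ge X (Fm.imp a b)) :
    X = Fm.imp a b ∨ Fm.ge X b := by
  cases h with
  | refl => exact Or.inl rfl
  | imp h => exact Or.inr h

lemma Fm.ge_disj {X a b : Fm} (h : Fm.ge X (Fm.disj a b)) :
    X = Fm.disj a b ∨ Fm.ge X a ∨ Fm.ge X b := by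
  cases h with
  | refl => exact Or.inl rfl
  | disjl h => exact Or.inr (Or.inl h)
  | disjr h => exact Or.inr (Or.inr h)

lemma Fm.ge_ex {X a : Fm} (h : Fm.ge X (Fm.ex a)) :
    X = Fm.ex a ∨ ∃ d : ℕ, Fm.ge X (a.inst (Tm.const d)) := by
  cases h with
  | refl => exact Or.inl rfl
  | ex c h => exact Or.inr ⟨c, h⟩

/-- G- and D-formulas are closed under substitution. -/
lemma GD_subst (F : Fm) : ∀ k u, (GFm F → GFm (Fm.subst k u F)) ∧ (DFm F → DFm (Fm.subst k u F)) := by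
  induction F with
  | top => intro k u; exact ⟨fun _ => GFm.top, fun _ => DFm.top⟩
  | bot => intro k u; exact ⟨fun _ => GFm.bot, fun _ => DFm.bot⟩
  | atom p ts => intro k u; exact ⟨fun _ => GFm.atom, fun _ => DFm.atom⟩
  | conj a b iha ihb =>
      intro k u
      constructor
      · rintro (_ | _ | _ | h); exact GFm.conj ((iha k u).1 ‹_›) ((ihb k u).1 ‹_›)
      · rintro h; cases h; exact DFm.conj ((iha k u).2 ‹_›) ((ihb k u).2 ‹_›)
  | disj a b iha ihb =>
      intro k u
      constructor
      · rintro h; cases h; exact GFm.disj ((iha k u).1 ‹_›) ((ihb k u).1 ‹_›)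
      · rintro h; cases h; exact DFm.disj ((iha k u).2 ‹_›) ((ihb k u).2 ‹_›)
  | imp a b iha ihb =>
      intro k u
      constructor
      · rintro h; cases h; exact GFm.imp ((iha k u).2 ‹_›) ((ihb k u).1 ‹_›)
      · rintro h; cases h; exact DFm.imp ((iha k u).1 ‹_›) ((ihb k u).2 ‹_›)
  | ex a iha =>
      intro k u
      constructor
      · rintro h; cases h; exact GFm.ex ((iha (k+1) u).1 ‹_›)
      · rintro h; cases h; exact DFm.ex ((iha (k+1) u).2 ‹_›)
  | all a iha =>
      intro k u
      constructor
      · rintro h; cases h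
      · rintro h; cases h; exact DFm.all ((iha (k+1) u).2 ‹_›)

lemma GFm.subst {F : Fm} (h : GFm F) (k : ℕ) (u : Tm) : GFm (Fm.subst k u F) :=
  (GD_subst F k u).1 h

lemma DFm.subst {F : Fm} (h : DFm F) (k : ℕ) (u : Tm) : DFm (Fm.subst k u F) :=
  (GD_subst F k u).2 h

lemma GFm.inst {F : Fm} (h : GFm F) (u : Tm) : GFm (F.inst u) := h.subst 0 u

lemma DFm.inst {F : Fm} (h : DFm F) (u : Tm) : DFm (F.inst u) := h.subst 0 u

lemma Fm.neutral_atom (p : ℕ) (ts : List Tm) : (Fm.atom p ts).neutral :=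
  Or.inl trivial

lemma Fm.neutral_bot : (Fm.bot).neutral := Or.inr rfl

/-- Axioms are preserved by renaming. -/
lemma AxSeq_ren (c c' : ℕ) {Γ Δ : Multiset Fm} (h : AxSeq Γ Δ) :
    AxSeq (Γ.map (Fm.ren c c')) (Δ.map (Fm.ren c c')) := by
  rcases h with h | ⟨A, hA, h1, h2⟩
  · left
    have : Fm.ren c c' Fm.top = Fm.top := rfl
    exact this ▸ Multiset.mem_map_of_mem _ h
  · right
    refine ⟨Fm.ren c c' A, ?_, Multiset.mem_map_of_mem _ h1, Multiset.mem_map_of_mem _ h2⟩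
    rcases hA with hA | hA
    · subst hA; exact Or.inl rfl
    · right; cases A <;> simp [Fm.isAtom, Fm.ren] at hA ⊢

lemma AxSeq_mono {Γ Γ' Δ : Multiset Fm} (h : AxSeq Γ Δ) (hsub : ∀ X ∈ Γ, X ∈ Γ') :
    AxSeq Γ' Δ := by
  rcases h with h | ⟨A, hA, h1, h2⟩
  · exact Or.inl h
  · exact Or.inr ⟨A, hA, hsub A h1, h2⟩

namespace IGProof

/-- Transport a proof along an equality of contexts. -/
def castC {G : Fm} {Γ Γ' : Multiset Fm} {F : Fm} (h : Γ = Γ') (p : IGProof G Γ F) :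
    IGProof G Γ' F := h ▸ p

@[simp] lemma size_castC {G : Fm} {Γ Γ' : Multiset Fm} {F : Fm} (h : Γ = Γ')
    (p : IGProof G Γ F) : (castC h p).size = p.size := by subst h; rfl

@[simp] lemma orLCount_castC {G : Fm} {Γ Γ' : Multiset Fm} {F : Fm} (h : Γ = Γ')
    (p : IGProof G Γ F) : (castC h p).orLCount = p.orLCount := by subst h; rfl

@[simp] lemma isOG_castC {G : Fm} {Γ Γ' : Multiset Fm} {F : Fm} (h : Γ = Γ')
    (p : IGProof G Γ F) : (castC h p).isOG ↔ p.isOG := by subst h; rfl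

/-- Transport a proof along an equality of succedents. -/
def castS {G : Fm} {Γ : Multiset Fm} {F F' : Fm} (h : F = F') (p : IGProof G Γ F) :
    IGProof G Γ F' := h ▸ p

@[simp] lemma size_castS {G : Fm} {Γ : Multiset Fm} {F F' : Fm} (h : F = F')
    (p : IGProof G Γ F) : (castS h p).size = p.size := by subst h; rfl

@[simp] lemma orLCount_castS {G : Fm} {Γ : Multiset Fm} {F F' : Fm} (h : F = F')
    (p : IGProof G Γ F) : (castS h p).orLCount = p.orLCount := by subst h; rfl

lemma size_pos {G : Fm} {Γ : Multiset Fm} {F : Fm} (p : IGProof G Γ F) : 1 ≤ p.size := by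
  cases p <;> simp [size]

end IGProof

lemma exists_fresh (S : Finset ℕ) : ∃ e, e ∉ S := ⟨freshC S, freshC_notMem S⟩

namespace IGProof

/-- Renaming of a constant throughout an orL-free I_G-proof. -/
lemma renEx {G : Fm} : ∀ (n : ℕ) {Γ : Multiset Fm} {F : Fm} (p : IGProof G Γ F),
    p.size ≤ n → p.orLCount = 0 → ∀ c c' : ℕ, ¬ G.constIn c →
    ∀ {Γ' : Multiset Fm} {F' : Fm}, Γ.map (Fm.ren c c') = Γ' → Fm.ren c c' F = F' →
    ∃ q : IGProof G Γ' F', q.orLCount = 0 ∧ q.size ≤ p.size := by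
  intro n
  induction n with
  | zero => intro Γ F p hs _ _ _ _ _ _ _ _; have := p.size_pos; omega
  | succ n IH =>
    intro Γ F p hs hL c c' hGc Γ' F' hΓ' hF'
    subst hΓ'; subst hF'
    cases p with
    | ax h =>
        have hax := AxSeq_ren c c' (Γ := Γ) (Δ := {F}) h
        rw [Multiset.map_singleton] at hax
        exact ⟨.ax hax, by simp [orLCount], by simp [size]⟩
    | @contrL B Γ₀ _ p₀ =>
        simp only [size] at hs ⊢
        simp only [orLCount] at hL ⊢
        obtain ⟨q₀, hL0, hs0⟩ := IH p₀ (by omega) hL c c' hGc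
          (Γ' := Fm.ren c c' B ::ₘ Fm.ren c c' B ::ₘ Γ₀.map (Fm.ren c c')) (by simp) rfl
        rw [Multiset.map_cons]
        exact ⟨.contrL q₀, by simpa [orLCount], by simp [size]; omega⟩
    | @botR _ _ p₀ =>
        simp only [size] at hs ⊢
        simp only [orLCount] at hL ⊢
        obtain ⟨q₀, hL0, hs0⟩ := IH p₀ (by omega) hL c c' hGc rfl (F' := Fm.bot) rfl
        exact ⟨.botR q₀, by simpa [orLCount], by simp [size]; omega⟩
    | @andL B D Γ₀ _ p₀ =>
        simp only [size] at hs ⊢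
        simp only [orLCount] at hL ⊢
        obtain ⟨q₀, hL0, hs0⟩ := IH p₀ (by omega) hL c c' hGc
          (Γ' := Fm.ren c c' B ::ₘ Fm.ren c c' D ::ₘ
            ((Fm.ren c c' B).conj (Fm.ren c c' D)) ::ₘ Γ₀.map (Fm.ren c c'))
          (by simp [Fm.ren]) rfl
        rw [Multiset.map_cons, show Fm.ren c c' (B.conj D)
          = (Fm.ren c c' B).conj (Fm.ren c c' D) from rfl]
        exact ⟨.andL q₀, by simpa [orLCount], by simp [size]; omega⟩
    | @andR B D _ p₁ p₂ =>
        simp only [size] at hs ⊢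
        simp only [orLCount] at hL ⊢
        obtain ⟨q₁, hL1, hs1⟩ := IH p₁ (by omega) (by omega) c c' hGc rfl rfl
        obtain ⟨q₂, hL2, hs2⟩ := IH p₂ (by omega) (by omega) c c' hGc rfl rfl
        rw [show Fm.ren c c' (B.conj D) = (Fm.ren c c' B).conj (Fm.ren c c' D) from rfl]
        exact ⟨.andR q₁ q₂, by simp [orLCount]; omega, by simp [size]; omega⟩
    | orL p₁ p₂ => simp [orLCount] at hL
    | @orR1 B D _ p₀ =>
        simp only [size] at hs ⊢
        simp only [orLCount] at hL ⊢
        obtain ⟨q₀, hL0, hs0⟩ := IH p₀ (by omega) hL c c' hGc rfl rfl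
        rw [show Fm.ren c c' (B.disj D) = (Fm.ren c c' B).disj (Fm.ren c c' D) from rfl]
        exact ⟨.orR1 q₀, by simpa [orLCount], by simp [size]; omega⟩
    | @orR2 B D _ p₀ =>
        simp only [size] at hs ⊢
        simp only [orLCount] at hL ⊢
        obtain ⟨q₀, hL0, hs0⟩ := IH p₀ (by omega) hL c c' hGc rfl rfl
        rw [show Fm.ren c c' (B.disj D) = (Fm.ren c c' B).disj (Fm.ren c c' D) from rfl]
        exact ⟨.orR2 q₀, by simpa [orLCount], by simp [size]; omega⟩
    | @impL B D Γ₀ _ p₁ p₂ =>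
        simp only [size] at hs ⊢
        simp only [orLCount] at hL ⊢
        obtain ⟨q₁, hL1, hs1⟩ := IH p₁ (by omega) (by omega) c c' hGc
          (Γ' := ((Fm.ren c c' B).imp (Fm.ren c c' D)) ::ₘ Γ₀.map (Fm.ren c c'))
          (by simp [Fm.ren]) rfl
        obtain ⟨q₂, hL2, hs2⟩ := IH p₂ (by omega) (by omega) c c' hGc
          (Γ' := Fm.ren c c' D ::ₘ Γ₀.map (Fm.ren c c')) (by simp) rfl
        rw [Multiset.map_cons, show Fm.ren c c' (B.imp D)
          = (Fm.ren c c' B).imp (Fm.ren c c' D) from rfl]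
        exact ⟨.impL q₁ q₂, by simp [orLCount]; omega, by simp [size]; omega⟩
    | @impR B D _ p₀ =>
        simp only [size] at hs ⊢
        simp only [orLCount] at hL ⊢
        obtain ⟨q₀, hL0, hs0⟩ := IH p₀ (by omega) hL c c' hGc
          (Γ' := Fm.ren c c' B ::ₘ Γ.map (Fm.ren c c')) (by simp) rfl
        rw [show Fm.ren c c' (B.imp D) = (Fm.ren c c' B).imp (Fm.ren c c' D) from rfl]
        exact ⟨.impR q₀, by simpa [orLCount], by simp [size]; omega⟩
    | @allL B Γ₀ _ t p₀ =>
        simp only [size] at hs ⊢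
        simp only [orLCount] at hL ⊢
        obtain ⟨q₀, hL0, hs0⟩ := IH p₀ (by omega) hL c c' hGc
          (Γ' := ((Fm.ren c c' B).inst (Tm.ren c c' t)) ::ₘ
            (Fm.all (Fm.ren c c' B)) ::ₘ Γ₀.map (Fm.ren c c'))
          (by simp [Fm.ren, Fm.ren_inst]) rfl
        rw [Multiset.map_cons, show Fm.ren c c' (Fm.all B) = Fm.all (Fm.ren c c' B) from rfl]
        exact ⟨.allL (Tm.ren c c' t) q₀, by simpa [orLCount], by simp [size]; omega⟩
    | @exR B _ t p₀ =>
        simp only [size] at hs ⊢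
        simp only [orLCount] at hL ⊢
        obtain ⟨q₀, hL0, hs0⟩ := IH p₀ (by omega) hL c c' hGc rfl
          (F' := (Fm.ren c c' B).inst (Tm.ren c c' t)) (Fm.ren_inst c c' t B)
        rw [show Fm.ren c c' (Fm.ex B) = Fm.ex (Fm.ren c c' B) from rfl]
        exact ⟨.exR (Tm.ren c c' t) q₀, by simpa [orLCount], by simp [size]; omega⟩
    | @exL B Γ₀ _ e hc hGe p₀ =>
        simp only [size] at hs ⊢
        simp only [orLCount] at hL ⊢
        have heB : ¬ B.constIn e := by
          have := hc.1 (Fm.ex B) (Multiset.mem_cons_self _ _)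
          simpa [Fm.constIn] using this
        have heΓ : ∀ X ∈ Γ₀, ¬ X.constIn e := fun X hX =>
          hc.1 X (Multiset.mem_cons_of_mem hX)
        have heF : ¬ F.constIn e := hc.2 F (Multiset.mem_singleton_self _)
        obtain ⟨e', he'⟩ := exists_fresh (B.consts ∪ MC Γ₀ ∪ F.consts ∪ G.consts ∪ {c, c'})
        simp only [Finset.mem_union, Finset.mem_insert, Finset.mem_singleton, not_or] at he'
        obtain ⟨⟨⟨⟨he'B, he'Γ⟩, he'F⟩, he'G⟩, he'c, he'c'⟩ := he'
        obtain ⟨q₁, hL1, hs1⟩ := IH p₀ (by omega) hL e e' hGe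
          (Γ' := (B.inst (Tm.const e')) ::ₘ Γ₀)
          (by rw [Multiset.map_cons, Fm.ren_inst, map_ren_eq_self e' heΓ,
            Fm.ren_eq_self e' (by rwa [← Fm.constIn_iff_mem]),
            show Tm.ren e e' (Tm.const e) = Tm.const e' by simp [Tm.ren]])
          (Fm.ren_eq_self e' (by rwa [← Fm.constIn_iff_mem]))
        obtain ⟨q₂, hL2, hs2⟩ := IH q₁ (by omega) hL1 c c' hGc
          (Γ' := ((Fm.ren c c' B).inst (Tm.const e')) ::ₘ Γ₀.map (Fm.ren c c'))
          (by rw [Multiset.map_cons, Fm.ren_inst,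
            show Tm.ren c c' (Tm.const e') = Tm.const e' by simp [Tm.ren, he'c]]) rfl
        rw [Multiset.map_cons, show Fm.ren c c' (Fm.ex B) = Fm.ex (Fm.ren c c' B) from rfl]
        refine ⟨.exL e' (show FreshSeq _ _ _ from ⟨?_, ?_⟩) (fun h => he'G (by rwa [← Fm.constIn_iff_mem] )) q₂,
          by simpa [orLCount], by simp [size]; omega⟩
        · intro X hX
          rcases Multiset.mem_cons.mp hX with h | h
          · subst h
            simpa [Fm.constIn] using Fm.not_constIn_ren (a := B)
              (fun hh => he'B (by rwa [Fm.constIn_iff_mem] at hh)) he'c'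
          · obtain ⟨Y, hY, rfl⟩ := Multiset.mem_map.mp h
            exact Fm.not_constIn_ren (not_constIn_of_notMem_MC hY he'Γ) he'c'
        · intro X hX
          rw [Multiset.mem_singleton.mp hX]
          exact Fm.not_constIn_ren
            (fun hh => he'F (by rwa [Fm.constIn_iff_mem] at hh)) he'c'
    | @allR B _ e hc hGe p₀ =>
        simp only [size] at hs ⊢
        simp only [orLCount] at hL ⊢
        have heB : ¬ B.constIn e := by
          have := hc.2 (Fm.all B) (Multiset.mem_singleton_self _)
          simpa [Fm.constIn] using this
        have heΓ : ∀ X ∈ Γ, ¬ X.constIn e := fun X hX => hc.1 X hX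
        obtain ⟨e', he'⟩ := exists_fresh (B.consts ∪ MC Γ ∪ G.consts ∪ {c, c'})
        simp only [Finset.mem_union, Finset.mem_insert, Finset.mem_singleton, not_or] at he'
        obtain ⟨⟨⟨he'B, he'Γ⟩, he'G⟩, he'c, he'c'⟩ := he'
        obtain ⟨q₁, hL1, hs1⟩ := IH p₀ (by omega) hL e e' hGe
          (Γ' := Γ) (map_ren_eq_self e' heΓ)
          (F' := B.inst (Tm.const e'))
          (by rw [Fm.ren_inst, Fm.ren_eq_self e' (by rwa [← Fm.constIn_iff_mem]),
            show Tm.ren e e' (Tm.const e) = Tm.const e' by simp [Tm.ren]])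
        obtain ⟨q₂, hL2, hs2⟩ := IH q₁ (by omega) hL1 c c' hGc rfl
          (F' := (Fm.ren c c' B).inst (Tm.const e'))
          (by rw [Fm.ren_inst,
            show Tm.ren c c' (Tm.const e') = Tm.const e' by simp [Tm.ren, he'c]])
        rw [show Fm.ren c c' (Fm.all B) = Fm.all (Fm.ren c c' B) from rfl]
        refine ⟨.allR e' (show FreshSeq _ _ _ from ⟨?_, ?_⟩) (fun h => he'G (by rwa [← Fm.constIn_iff_mem])) q₂,
          by simpa [orLCount], by simp [size]; omega⟩
        · intro X hX
          obtain ⟨Y, hY, rfl⟩ := Multiset.mem_map.mp hX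
          exact Fm.not_constIn_ren (not_constIn_of_notMem_MC hY he'Γ) he'c'
        · intro X hX
          rw [Multiset.mem_singleton.mp hX]
          simpa [Fm.constIn] using Fm.not_constIn_ren (a := B)
            (fun hh => he'B (by rwa [Fm.constIn_iff_mem] at hh)) he'c'
    | @orLG B D Γ₀ _ p₁ p₂ =>
        simp only [size] at hs ⊢
        simp only [orLCount] at hL ⊢
        obtain ⟨q₁, hL1, hs1⟩ := IH p₁ (by omega) (by omega) c c' hGc
          (Γ' := Fm.ren c c' B ::ₘ Γ₀.map (Fm.ren c c')) (by simp) rfl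
        obtain ⟨q₂, hL2, hs2⟩ := IH p₂ (by omega) (by omega) c c' hGc
          (Γ' := Fm.ren c c' D ::ₘ Γ₀.map (Fm.ren c c')) (by simp)
          (F' := G) (Fm.ren_eq_self c' (by rwa [← Fm.constIn_iff_mem]))
        rw [Multiset.map_cons, show Fm.ren c c' (B.disj D)
          = (Fm.ren c c' B).disj (Fm.ren c c' D) from rfl]
        exact ⟨.orLG q₁ q₂, by simp [orLCount]; omega, by simp [size]; omega⟩
    | @resG _ _ p₀ =>
        simp only [size] at hs ⊢
        simp only [orLCount] at hL ⊢
        obtain ⟨q₀, hL0, hs0⟩ := IH p₀ (by omega) hL c c' hGc rfl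
          (F' := G) (Fm.ren_eq_self c' (by rwa [← Fm.constIn_iff_mem]))
        exact ⟨.resG q₀, by simpa [orLCount], by simp [size]; omega⟩

end IGProof

namespace IGProof

/-- Weakening of orL-free I_G-proofs. -/
lemma wkEx {G : Fm} : ∀ (n : ℕ) {Γ : Multiset Fm} {F : Fm} (p : IGProof G Γ F),
    p.size ≤ n → p.orLCount = 0 → ∀ (W : Multiset Fm) {Γ' : Multiset Fm}, W + Γ = Γ' →
    ∃ q : IGProof G Γ' F, q.orLCount = 0 ∧ q.size ≤ p.size := by
  intro n
  induction n with
  | zero => intro Γ F p hs _ _ _ _; have := p.size_pos; omega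
  | succ n IH =>
    intro Γ F p hs hL W Γ' hΓ'
    subst hΓ'
    cases p with
    | ax h =>
        refine ⟨.ax (AxSeq_mono h (fun X hX => ?_)), by simp [orLCount], by simp [size]⟩
        exact Multiset.mem_add.mpr (Or.inr hX)
    | @contrL B Γ₀ _ p₀ =>
        simp only [size] at hs ⊢
        simp only [orLCount] at hL ⊢
        obtain ⟨q₀, hL0, hs0⟩ := IH p₀ (by omega) hL W
          (Γ' := B ::ₘ B ::ₘ (W + Γ₀)) (by simp [Multiset.add_cons])
        rw [Multiset.add_cons]
        exact ⟨.contrL q₀, by simpa [orLCount], by simp [size]; omega⟩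
    | @botR _ _ p₀ =>
        simp only [size] at hs ⊢
        simp only [orLCount] at hL ⊢
        obtain ⟨q₀, hL0, hs0⟩ := IH p₀ (by omega) hL W rfl
        exact ⟨.botR q₀, by simpa [orLCount], by simp [size]; omega⟩
    | @andL B D Γ₀ _ p₀ =>
        simp only [size] at hs ⊢
        simp only [orLCount] at hL ⊢
        obtain ⟨q₀, hL0, hs0⟩ := IH p₀ (by omega) hL W
          (Γ' := B ::ₘ D ::ₘ (B.conj D) ::ₘ (W + Γ₀)) (by simp [Multiset.add_cons])
        rw [Multiset.add_cons]
        exact ⟨.andL q₀, by simpa [orLCount], by simp [size]; omega⟩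
    | @andR B D _ p₁ p₂ =>
        simp only [size] at hs ⊢
        simp only [orLCount] at hL ⊢
        obtain ⟨q₁, hL1, hs1⟩ := IH p₁ (by omega) (by omega) W rfl
        obtain ⟨q₂, hL2, hs2⟩ := IH p₂ (by omega) (by omega) W rfl
        exact ⟨.andR q₁ q₂, by simp [orLCount]; omega, by simp [size]; omega⟩
    | orL p₁ p₂ => simp [orLCount] at hL
    | @orR1 B D _ p₀ =>
        simp only [size] at hs ⊢
        simp only [orLCount] at hL ⊢
        obtain ⟨q₀, hL0, hs0⟩ := IH p₀ (by omega) hL W rfl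
        exact ⟨.orR1 q₀, by simpa [orLCount], by simp [size]; omega⟩
    | @orR2 B D _ p₀ =>
        simp only [size] at hs ⊢
        simp only [orLCount] at hL ⊢
        obtain ⟨q₀, hL0, hs0⟩ := IH p₀ (by omega) hL W rfl
        exact ⟨.orR2 q₀, by simpa [orLCount], by simp [size]; omega⟩
    | @impL B D Γ₀ _ p₁ p₂ =>
        simp only [size] at hs ⊢
        simp only [orLCount] at hL ⊢
        obtain ⟨q₁, hL1, hs1⟩ := IH p₁ (by omega) (by omega) W
          (Γ' := (B.imp D) ::ₘ (W + Γ₀)) (by simp [Multiset.add_cons])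
        obtain ⟨q₂, hL2, hs2⟩ := IH p₂ (by omega) (by omega) W
          (Γ' := D ::ₘ (W + Γ₀)) (by simp [Multiset.add_cons])
        rw [Multiset.add_cons]
        exact ⟨.impL q₁ q₂, by simp [orLCount]; omega, by simp [size]; omega⟩
    | @impR B D _ p₀ =>
        simp only [size] at hs ⊢
        simp only [orLCount] at hL ⊢
        obtain ⟨q₀, hL0, hs0⟩ := IH p₀ (by omega) hL W
          (Γ' := B ::ₘ (W + Γ)) (by simp [Multiset.add_cons])
        exact ⟨.impR q₀, by simpa [orLCount], by simp [size]; omega⟩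
    | @allL B Γ₀ _ t p₀ =>
        simp only [size] at hs ⊢
        simp only [orLCount] at hL ⊢
        obtain ⟨q₀, hL0, hs0⟩ := IH p₀ (by omega) hL W
          (Γ' := (B.inst t) ::ₘ (Fm.all B) ::ₘ (W + Γ₀)) (by simp [Multiset.add_cons])
        rw [Multiset.add_cons]
        exact ⟨.allL t q₀, by simpa [orLCount], by simp [size]; omega⟩
    | @exR B _ t p₀ =>
        simp only [size] at hs ⊢
        simp only [orLCount] at hL ⊢
        obtain ⟨q₀, hL0, hs0⟩ := IH p₀ (by omega) hL W rfl
        exact ⟨.exR t q₀, by simpa [orLCount], by simp [size]; omega⟩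
    | @exL B Γ₀ _ e hc hGe p₀ =>
        simp only [size] at hs ⊢
        simp only [orLCount] at hL ⊢
        have heB : ¬ B.constIn e := by
          have := hc.1 (Fm.ex B) (Multiset.mem_cons_self _ _)
          simpa [Fm.constIn] using this
        have heΓ : ∀ X ∈ Γ₀, ¬ X.constIn e := fun X hX =>
          hc.1 X (Multiset.mem_cons_of_mem hX)
        have heF : ¬ F.constIn e := hc.2 F (Multiset.mem_singleton_self _)
        obtain ⟨e', he'⟩ := exists_fresh (B.consts ∪ MC Γ₀ ∪ MC W ∪ F.consts ∪ G.consts)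
        simp only [Finset.mem_union, not_or] at he'
        obtain ⟨⟨⟨⟨he'B, he'Γ⟩, he'W⟩, he'F⟩, he'G⟩ := he'
        obtain ⟨q₁, hL1, hs1⟩ := renEx n p₀ (by omega) hL e e'
          hGe (Γ' := (B.inst (Tm.const e')) ::ₘ Γ₀)
          (by rw [Multiset.map_cons, Fm.ren_inst, map_ren_eq_self e' heΓ,
            Fm.ren_eq_self e' (by rwa [← Fm.constIn_iff_mem]),
            show Tm.ren e e' (Tm.const e) = Tm.const e' by simp [Tm.ren]])
          (Fm.ren_eq_self e' (by rwa [← Fm.constIn_iff_mem]))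
        obtain ⟨q₂, hL2, hs2⟩ := IH q₁ (by omega) hL1 W
          (Γ' := (B.inst (Tm.const e')) ::ₘ (W + Γ₀)) (by simp [Multiset.add_cons])
        rw [Multiset.add_cons]
        refine ⟨.exL e' (show FreshSeq _ _ _ from ⟨?_, ?_⟩) (fun h => he'G (by rwa [← Fm.constIn_iff_mem])) q₂,
          by simpa [orLCount], by simp [size]; omega⟩
        · intro X hX
          rcases Multiset.mem_cons.mp hX with h | h
          · subst h
            simp only [Fm.constIn]
            rwa [Fm.constIn_iff_mem]
          · rcases Multiset.mem_add.mp h with h | h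
            · exact not_constIn_of_notMem_MC h he'W
            · exact not_constIn_of_notMem_MC h he'Γ
        · intro X hX
          rw [Multiset.mem_singleton.mp hX]
          rwa [Fm.constIn_iff_mem]
    | @allR B _ e hc hGe p₀ =>
        simp only [size] at hs ⊢
        simp only [orLCount] at hL ⊢
        have heB : ¬ B.constIn e := by
          have := hc.2 (Fm.all B) (Multiset.mem_singleton_self _)
          simpa [Fm.constIn] using this
        have heΓ : ∀ X ∈ Γ, ¬ X.constIn e := fun X hX => hc.1 X hX
        obtain ⟨e', he'⟩ := exists_fresh (B.consts ∪ MC Γ ∪ MC W ∪ G.consts)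
        simp only [Finset.mem_union, not_or] at he'
        obtain ⟨⟨⟨he'B, he'Γ⟩, he'W⟩, he'G⟩ := he'
        obtain ⟨q₁, hL1, hs1⟩ := renEx n p₀ (by omega) hL e e'
          hGe (Γ' := Γ) (map_ren_eq_self e' heΓ)
          (F' := B.inst (Tm.const e'))
          (by rw [Fm.ren_inst, Fm.ren_eq_self e' (by rwa [← Fm.constIn_iff_mem]),
            show Tm.ren e e' (Tm.const e) = Tm.const e' by simp [Tm.ren]])
        obtain ⟨q₂, hL2, hs2⟩ := IH q₁ (by omega) hL1 W rfl
        refine ⟨.allR e' (show FreshSeq _ _ _ from ⟨?_, ?_⟩) (fun h => he'G (by rwa [← Fm.constIn_iff_mem])) q₂,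
          by simpa [orLCount], by simp [size]; omega⟩
        · intro X hX
          rcases Multiset.mem_add.mp hX with h | h
          · exact not_constIn_of_notMem_MC h he'W
          · exact not_constIn_of_notMem_MC h he'Γ
        · intro X hX
          rw [Multiset.mem_singleton.mp hX]
          simp only [Fm.constIn]
          rwa [Fm.constIn_iff_mem]
    | @orLG B D Γ₀ _ p₁ p₂ =>
        simp only [size] at hs ⊢
        simp only [orLCount] at hL ⊢
        obtain ⟨q₁, hL1, hs1⟩ := IH p₁ (by omega) (by omega) W
          (Γ' := B ::ₘ (W + Γ₀)) (by simp [Multiset.add_cons])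
        obtain ⟨q₂, hL2, hs2⟩ := IH p₂ (by omega) (by omega) W
          (Γ' := D ::ₘ (W + Γ₀)) (by simp [Multiset.add_cons])
        rw [Multiset.add_cons]
        exact ⟨.orLG q₁ q₂, by simp [orLCount]; omega, by simp [size]; omega⟩
    | @resG _ _ p₀ =>
        simp only [size] at hs ⊢
        simp only [orLCount] at hL ⊢
        obtain ⟨q₀, hL0, hs0⟩ := IH p₀ (by omega) hL W rfl
        exact ⟨.resG q₀, by simpa [orLCount], by simp [size]; omega⟩

end IGProof

/-- Uniform (O_G) provability. -/
def UP (G : Fm) (Δ : Multiset Fm) (F : Fm) : Prop := ∃ q : IGProof G Δ F, q.isOG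

namespace UP

variable {G : Fm} {Δ : Multiset Fm} {F B D : Fm}

lemma ax (h : AxSeq Δ ({F} : Multiset Fm)) : UP G Δ F :=
  ⟨.ax h, by simp [IGProof.isOG]⟩

lemma top : UP G Δ Fm.top := ax (Or.inl (Multiset.mem_singleton_self _))

lemma andR (h1 : UP G Δ B) (h2 : UP G Δ D) : UP G Δ (B.conj D) := by
  obtain ⟨p, hp⟩ := h1; obtain ⟨q, hq⟩ := h2
  exact ⟨.andR p q, by simp [IGProof.isOG]; exact ⟨hp, hq⟩⟩

lemma orR1 (h : UP G Δ B) : UP G Δ (B.disj D) := by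
  obtain ⟨p, hp⟩ := h; exact ⟨.orR1 p, by simpa [IGProof.isOG]⟩

lemma orR2 (h : UP G Δ D) : UP G Δ (B.disj D) := by
  obtain ⟨p, hp⟩ := h; exact ⟨.orR2 p, by simpa [IGProof.isOG]⟩

lemma impR (h : UP G (B ::ₘ Δ) D) : UP G Δ (B.imp D) := by
  obtain ⟨p, hp⟩ := h; exact ⟨.impR p, by simpa [IGProof.isOG]⟩

lemma exR (t : Tm) (h : UP G Δ (B.inst t)) : UP G Δ (Fm.ex B) := by
  obtain ⟨p, hp⟩ := h; exact ⟨.exR t p, by simpa [IGProof.isOG]⟩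

lemma allR (c : ℕ) (hc : FreshSeq c Δ ({Fm.all B} : Multiset Fm)) (hG : ¬ G.constIn c)
    (h : UP G Δ (B.inst (Tm.const c))) : UP G Δ (Fm.all B) := by
  obtain ⟨p, hp⟩ := h; exact ⟨.allR c hc hG p, by simpa [IGProof.isOG]⟩

lemma resG (hF : F.neutral) (h : UP G Δ G) : UP G Δ F := by
  obtain ⟨p, hp⟩ := h; exact ⟨.resG p, by simp [IGProof.isOG]; exact ⟨hF, hp⟩⟩

lemma botR (hF : F.neutral) (h : UP G Δ Fm.bot) : UP G Δ F := by
  obtain ⟨p, hp⟩ := h; exact ⟨.botR p, by simp [IGProof.isOG]; exact ⟨hF, hp⟩⟩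

lemma andL (hF : F.neutral) (h : UP G (B ::ₘ D ::ₘ (B.conj D) ::ₘ Δ) F) :
    UP G ((B.conj D) ::ₘ Δ) F := by
  obtain ⟨p, hp⟩ := h; exact ⟨.andL p, by simp [IGProof.isOG]; exact ⟨hF, hp⟩⟩

lemma allL (hF : F.neutral) (t : Tm) (h : UP G ((B.inst t) ::ₘ (Fm.all B) ::ₘ Δ) F) :
    UP G ((Fm.all B) ::ₘ Δ) F := by
  obtain ⟨p, hp⟩ := h; exact ⟨.allL t p, by simp [IGProof.isOG]; exact ⟨hF, hp⟩⟩

lemma impL (hF : F.neutral) (h1 : UP G ((B.imp D) ::ₘ Δ) B) (h2 : UP G (D ::ₘ Δ) F) :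
    UP G ((B.imp D) ::ₘ Δ) F := by
  obtain ⟨p, hp⟩ := h1; obtain ⟨q, hq⟩ := h2
  exact ⟨.impL p q, by simp [IGProof.isOG]; exact ⟨hF, hp, hq⟩⟩

lemma orLG (hF : F.neutral) (h1 : UP G (B ::ₘ Δ) F) (h2 : UP G (D ::ₘ Δ) G) :
    UP G ((B.disj D) ::ₘ Δ) F := by
  obtain ⟨p, hp⟩ := h1; obtain ⟨q, hq⟩ := h2
  exact ⟨.orLG p q, by simp [IGProof.isOG]; exact ⟨hF, hp, hq⟩⟩

lemma exL (hF : F.neutral) (c : ℕ) (hc : FreshSeq c ((Fm.ex B) ::ₘ Δ) ({F} : Multiset Fm))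
    (hG : ¬ G.constIn c) (h : UP G ((B.inst (Tm.const c)) ::ₘ Δ) F) :
    UP G ((Fm.ex B) ::ₘ Δ) F := by
  obtain ⟨p, hp⟩ := h; exact ⟨.exL c hc hG p, by simp [IGProof.isOG]; exact ⟨hF, hp⟩⟩

end UP

/-- `Cov Δ Γ`: every formula of `Γ` is covered by a stronger formula in `Δ`. -/
def Cov (Δ Γ : Multiset Fm) : Prop := ∀ y ∈ Γ, ∃ x ∈ Δ, Fm.ge x y

lemma Cov.refl (Γ : Multiset Fm) : Cov Γ Γ := fun y hy => ⟨y, hy, Fm.ge.refl y⟩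

lemma Cov.addL (Sg : Multiset Fm) {Δ Γ : Multiset Fm} (h : Cov Δ Γ) : Cov (Sg + Δ) Γ :=
  fun y hy => by
    obtain ⟨x, hx, hge⟩ := h y hy
    exact ⟨x, Multiset.mem_add.mpr (Or.inr hx), hge⟩

lemma Cov.consL (a : Fm) {Δ Γ : Multiset Fm} (h : Cov Δ Γ) : Cov (a ::ₘ Δ) Γ :=
  fun y hy => by
    obtain ⟨x, hx, hge⟩ := h y hy
    exact ⟨x, Multiset.mem_cons_of_mem hx, hge⟩

lemma Cov.tail {Δ Γ : Multiset Fm} {a : Fm} (h : Cov Δ (a ::ₘ Γ)) : Cov Δ Γ :=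
  fun y hy => h y (Multiset.mem_cons_of_mem hy)

lemma Cov.cons_of {Δ Γ : Multiset Fm} {a x : Fm} (hx : x ∈ Δ) (hge : Fm.ge x a)
    (h : Cov Δ Γ) : Cov Δ (a ::ₘ Γ) := by
  intro y hy
  rcases Multiset.mem_cons.mp hy with rfl | hy
  · exact ⟨x, hx, hge⟩
  · exact h y hy

/-- Expansion of an arbitrary G-formula goal from a neutral-goal provider. -/
lemma expand {G : Fm} {Δ : Multiset Fm}
    (H : ∀ (Sg : Multiset Fm) (F₀ : Fm), F₀.neutral → UP G (Sg + Δ) F₀) :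
    ∀ (n : ℕ) (F : Fm), F.sizeF ≤ n → GFm F → ∀ Sg, UP G (Sg + Δ) F := by
  intro n
  induction n with
  | zero => intro F hs; have := F.sizeF_pos; omega
  | succ n IH =>
    intro F hs hF Sg
    cases hF with
    | top => exact UP.top
    | bot => exact H Sg Fm.bot (Or.inr rfl)
    | atom => exact H Sg _ (Or.inl trivial)
    | @conj a b ha hb =>
        simp only [Fm.sizeF] at hs
        exact UP.andR (IH a (by omega) ha Sg) (IH b (by omega) hb Sg)
    | @disj a b ha hb =>
        simp only [Fm.sizeF] at hs
        exact UP.orR1 (IH a (by omega) ha Sg)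
    | @imp a b ha hb =>
        simp only [Fm.sizeF] at hs
        apply UP.impR
        have := IH b (by omega) hb (a ::ₘ Sg)
        rwa [Multiset.cons_add] at this
    | @ex a ha =>
        simp only [Fm.sizeF] at hs
        exact UP.exR (Tm.const 0)
          (IH (a.inst (Tm.const 0)) (by rw [Fm.sizeF_inst]; omega) (ha.inst _) Sg)

/-- The grafting invariant: a replacement proof for the current node can be
completed, over any weakening, to a proof of a strengthened root sequent. -/
def KTy (G : Fm) (Γr : Multiset Fm) (N : ℕ) (Δ : Multiset Fm) (Γ' : Multiset Fm)
    (F' : Fm) (s : ℕ) : Prop :=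
  ∀ (W : Multiset Fm) (r : IGProof G (W + Γ') F'), r.orLCount = 0 →
    ∃ (V : Multiset Fm) (p' : IGProof G ((W + V) + Γr) G),
      p'.orLCount = 0 ∧ p'.size + s ≤ N + r.size ∧
      (∀ Y ∈ V, DFm Y) ∧ (∀ Y ∈ V, ∃ x ∈ Δ, Fm.ge x Y)

lemma KTy.mono {G : Fm} {Γr : Multiset Fm} {N : ℕ} {Δ Δ₂ Γ' : Multiset Fm} {F' : Fm}
    {s : ℕ} (h : KTy G Γr N Δ Γ' F' s) (hsub : ∀ x ∈ Δ, x ∈ Δ₂) :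
    KTy G Γr N Δ₂ Γ' F' s := by
  intro W r hr
  obtain ⟨V, p', h1, h2, h3, h4⟩ := h W r hr
  exact ⟨V, p', h1, h2, h3, fun Y hY => by
    obtain ⟨x, hx, hgex⟩ := h4 Y hY
    exact ⟨x, hsub x hx, hgex⟩⟩

lemma ge_inst_ex (d : ℕ) (B : Fm) : Fm.ge (B.inst (Tm.const d)) (Fm.ex B) :=
  Fm.ge.ex d (Fm.ge.refl _)

lemma inner {G : Fm} (hGG : GFm G) (Γr : Multiset Fm) (hDr : ∀ X ∈ Γr, DFm X) (N : ℕ)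
    (REST : ∀ m, m < N → ∀ (Γ2 : Multiset Fm), (∀ X ∈ Γ2, DFm X) →
      ∀ (p2 : IGProof G Γ2 G), p2.orLCount = 0 → p2.size ≤ m →
      ∀ Δ, Cov Δ Γ2 → UP G Δ G) :
    ∀ (s : ℕ) (Γ' : Multiset Fm) (F' : Fm) (q : IGProof G Γ' F'), q.orLCount = 0 →
      q.size ≤ s → (∀ X ∈ Γ', DFm X) → GFm F' →
      ∀ (Δ : Multiset Fm), Cov Δ Γ' → Cov Δ Γr → KTy G Γr N Δ Γ' F' q.size →
      UP G Δ F' := by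
  intro s
  induction s using Nat.strong_induction_on with
  | _ s IHs =>
  intro Γ' F' q
  cases q with
  | ax h =>
      intro _ _ hD hF Δ hCov hCovR K
      rcases h with h | ⟨A, hA, h1, h2⟩
      · obtain rfl := Multiset.mem_singleton.mp h
        exact UP.top
      · obtain rfl := Multiset.mem_singleton.mp h2
        obtain ⟨X, hXΔ, hge⟩ := hCov A h1
        have hXA : X = A := by
          apply Fm.ge_neutral hge
          rcases hA with hA | hA
          · exact Or.inr hA
          · exact Or.inl hA
        exact UP.ax (Or.inr ⟨A, hA, hXA ▸ hXΔ, Multiset.mem_singleton_self _⟩)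
  | @contrL B Γ₀ _ q₀ =>
      intro hqL hqs hD hF Δ hCov hCovR K
      simp only [IGProof.orLCount] at hqL
      simp only [IGProof.size] at hqs
      have hq₀pos := q₀.size_pos
      refine IHs (s - 1) (by omega) _ _ q₀ hqL (by omega) ?_ hF Δ ?_ hCovR ?_
      · intro X hX
        apply hD
        rcases Multiset.mem_cons.mp hX with rfl | hX
        · exact Multiset.mem_cons_self _ _
        · exact hX
      · intro y hy
        apply hCov
        rcases Multiset.mem_cons.mp hy with rfl | hy
        · exact Multiset.mem_cons_self _ _
        · exact hy
      · intro W r hrL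
        obtain ⟨V, p', hp'L, hp's, hVD, hVC⟩ := K W
          (((r.castC (show W + (B ::ₘ B ::ₘ Γ₀) = B ::ₘ B ::ₘ (W + Γ₀) by
              simp [Multiset.add_cons])).contrL).castC
            (show B ::ₘ (W + Γ₀) = W + (B ::ₘ Γ₀) by rw [Multiset.add_cons]))
          (by simpa [IGProof.orLCount])
        refine ⟨V, p', hp'L, ?_, hVD, hVC⟩
        simp only [IGProof.size, IGProof.size_castC] at hp's ⊢
        omega
  | @botR _ _ q₀ =>
      intro hqL hqs hD hF Δ hCov hCovR K
      simp only [IGProof.orLCount] at hqL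
      simp only [IGProof.size] at hqs
      have hq₀pos := q₀.size_pos
      have base : ∀ (Sg : Multiset Fm) (F₀ : Fm), F₀.neutral → UP G (Sg + Δ) F₀ := by
        intro Sg F₀ hF₀
        apply UP.botR hF₀
        refine IHs (s - 1) (by omega) _ _ q₀ hqL (by omega) hD GFm.bot (Sg + Δ)
          (Cov.addL Sg hCov) (Cov.addL Sg hCovR) ?_
        refine KTy.mono ?_ (fun x hx => Multiset.mem_add.mpr (Or.inr hx))
        intro W r hrL
        obtain ⟨V, p', hp'L, hp's, hVD, hVC⟩ := K W (r.botR) (by simpa [IGProof.orLCount])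
        refine ⟨V, p', hp'L, ?_, hVD, hVC⟩
        simp only [IGProof.size] at hp's ⊢
        omega
      have := expand base F'.sizeF F' le_rfl hF 0
      rwa [zero_add] at this
  | @resG _ _ q₀ =>
      intro hqL hqs hD hF Δ hCov hCovR K
      simp only [IGProof.orLCount] at hqL
      simp only [IGProof.size] at hqs
      have hq₀pos := q₀.size_pos
      have base : ∀ (Sg : Multiset Fm) (F₀ : Fm), F₀.neutral → UP G (Sg + Δ) F₀ := by
        intro Sg F₀ hF₀
        apply UP.resG hF₀
        refine IHs (s - 1) (by omega) _ _ q₀ hqL (by omega) hD hGG (Sg + Δ)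
          (Cov.addL Sg hCov) (Cov.addL Sg hCovR) ?_
        refine KTy.mono ?_ (fun x hx => Multiset.mem_add.mpr (Or.inr hx))
        intro W r hrL
        obtain ⟨V, p', hp'L, hp's, hVD, hVC⟩ := K W (r.resG) (by simpa [IGProof.orLCount])
        refine ⟨V, p', hp'L, ?_, hVD, hVC⟩
        simp only [IGProof.size] at hp's ⊢
        omega
      have := expand base F'.sizeF F' le_rfl hF 0
      rwa [zero_add] at this
  | orL q₁ q₂ =>
      intro hqL
      simp [IGProof.orLCount] at hqL
  | @andR B D _ q₁ q₂ =>
      intro hqL hqs hD hF Δ hCov hCovR K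
      simp only [IGProof.orLCount] at hqL
      simp only [IGProof.size] at hqs
      have h1 := q₁.size_pos; have h2 := q₂.size_pos
      cases hF with
      | conj hFB hFD =>
        refine UP.andR ?_ ?_
        · refine IHs (s - 1) (by omega) _ _ q₁ (by omega) (by omega) hD hFB Δ hCov hCovR ?_
          intro W r hrL
          obtain ⟨w₂, hw₂L, hw₂s⟩ := IGProof.wkEx q₂.size q₂ le_rfl (by omega) W rfl
          obtain ⟨V, p', hp'L, hp's, hVD, hVC⟩ := K W (r.andR w₂)
            (by simp [IGProof.orLCount]; omega)
          refine ⟨V, p', hp'L, ?_, hVD, hVC⟩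
          simp only [IGProof.size] at hp's ⊢
          omega
        · refine IHs (s - 1) (by omega) _ _ q₂ (by omega) (by omega) hD hFD Δ hCov hCovR ?_
          intro W r hrL
          obtain ⟨w₁, hw₁L, hw₁s⟩ := IGProof.wkEx q₁.size q₁ le_rfl (by omega) W rfl
          obtain ⟨V, p', hp'L, hp's, hVD, hVC⟩ := K W (w₁.andR r)
            (by simp [IGProof.orLCount]; omega)
          refine ⟨V, p', hp'L, ?_, hVD, hVC⟩
          simp only [IGProof.size] at hp's ⊢
          omega
  | @orR1 B D _ q₀ =>
      intro hqL hqs hD hF Δ hCov hCovR K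
      simp only [IGProof.orLCount] at hqL
      simp only [IGProof.size] at hqs
      have hq₀pos := q₀.size_pos
      cases hF with
      | disj hFB hFD =>
        refine UP.orR1 (IHs (s - 1) (by omega) _ _ q₀ hqL (by omega) hD hFB Δ hCov hCovR ?_)
        intro W r hrL
        obtain ⟨V, p', hp'L, hp's, hVD, hVC⟩ := K W (r.orR1) (by simpa [IGProof.orLCount])
        refine ⟨V, p', hp'L, ?_, hVD, hVC⟩
        simp only [IGProof.size] at hp's ⊢
        omega
  | @orR2 B D _ q₀ =>
      intro hqL hqs hD hF Δ hCov hCovR K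
      simp only [IGProof.orLCount] at hqL
      simp only [IGProof.size] at hqs
      have hq₀pos := q₀.size_pos
      cases hF with
      | disj hFB hFD =>
        refine UP.orR2 (IHs (s - 1) (by omega) _ _ q₀ hqL (by omega) hD hFD Δ hCov hCovR ?_)
        intro W r hrL
        obtain ⟨V, p', hp'L, hp's, hVD, hVC⟩ := K W (r.orR2) (by simpa [IGProof.orLCount])
        refine ⟨V, p', hp'L, ?_, hVD, hVC⟩
        simp only [IGProof.size] at hp's ⊢
        omega
  | @impR B D _ q₀ =>
      intro hqL hqs hD hF Δ hCov hCovR K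
      simp only [IGProof.orLCount] at hqL
      simp only [IGProof.size] at hqs
      have hq₀pos := q₀.size_pos
      cases hF with
      | imp hDB hFD =>
        apply UP.impR
        refine IHs (s - 1) (by omega) _ _ q₀ hqL (by omega) ?_ hFD (B ::ₘ Δ) ?_
          (Cov.consL B hCovR) ?_
        · intro X hX
          rcases Multiset.mem_cons.mp hX with rfl | hX
          · exact hDB
          · exact hD X hX
        · exact Cov.cons_of (Multiset.mem_cons_self _ _) (Fm.ge.refl _) (Cov.consL B hCov)
        · refine KTy.mono ?_ (fun x hx => Multiset.mem_cons_of_mem hx)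
          intro W r hrL
          obtain ⟨V, p', hp'L, hp's, hVD, hVC⟩ := K W
            ((r.castC (show W + (B ::ₘ Γ') = B ::ₘ (W + Γ') by
              rw [Multiset.add_cons])).impR)
            (by simpa [IGProof.orLCount])
          refine ⟨V, p', hp'L, ?_, hVD, hVC⟩
          simp only [IGProof.size, IGProof.size_castC] at hp's ⊢
          omega
  | @exR B _ t q₀ =>
      intro hqL hqs hD hF Δ hCov hCovR K
      simp only [IGProof.orLCount] at hqL
      simp only [IGProof.size] at hqs
      have hq₀pos := q₀.size_pos
      cases hF with
      | ex hFB =>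
        refine UP.exR t (IHs (s - 1) (by omega) _ _ q₀ hqL (by omega) hD (hFB.inst t)
          Δ hCov hCovR ?_)
        intro W r hrL
        obtain ⟨V, p', hp'L, hp's, hVD, hVC⟩ := K W (r.exR t) (by simpa [IGProof.orLCount])
        refine ⟨V, p', hp'L, ?_, hVD, hVC⟩
        simp only [IGProof.size] at hp's ⊢
        omega
  | @allR B _ e hc hGe q₀ =>
      intro hqL hqs hD hF
      cases hF
  | @andL B D Γ₀ _ q₀ =>
      intro hqL hqs hD hF Δ hCov hCovR K
      simp only [IGProof.orLCount] at hqL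
      simp only [IGProof.size] at hqs
      have hq₀pos := q₀.size_pos
      obtain ⟨X, hXΔ, hge⟩ := hCov (B.conj D) (Multiset.mem_cons_self _ _)
      obtain rfl := Fm.ge_conj hge
      have hDBD : DFm (B.conj D) := hD _ (Multiset.mem_cons_self _ _)
      have hDB : DFm B := by cases hDBD; assumption
      have hDD : DFm D := by cases hDBD; assumption
      have hΔ : (B.conj D) ::ₘ Δ.erase (B.conj D) = Δ := Multiset.cons_erase hXΔ
      have base : ∀ (Sg : Multiset Fm) (F₀ : Fm), F₀.neutral → UP G (Sg + Δ) F₀ := by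
        intro Sg F₀ hF₀
        rw [show Sg + Δ = (B.conj D) ::ₘ (Sg + Δ.erase (B.conj D)) by
          conv_lhs => rw [← hΔ, Multiset.add_cons]]
        apply UP.andL hF₀
        apply UP.resG hF₀
        obtain ⟨V, p', hp'L, hp's, hVD, hVC⟩ := K (B ::ₘ {D})
          (q₀.castC (show B ::ₘ D ::ₘ ((B.conj D) ::ₘ Γ₀)
              = (B ::ₘ {D}) + ((B.conj D) ::ₘ Γ₀) by
            rw [Multiset.cons_add, Multiset.singleton_add]))
          (by simpa using hqL)
        have hrel : ∀ y : Fm, (∃ x ∈ Δ, Fm.ge x y) →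
            ∃ x ∈ B ::ₘ D ::ₘ (B.conj D) ::ₘ (Sg + Δ.erase (B.conj D)), Fm.ge x y := by
          rintro y ⟨x, hx, hgex⟩
          refine ⟨x, ?_, hgex⟩
          rw [← hΔ] at hx
          rcases Multiset.mem_cons.mp hx with h | hx
          · rw [h]
            exact Multiset.mem_cons_of_mem
              (Multiset.mem_cons_of_mem (Multiset.mem_cons_self _ _))
          · exact Multiset.mem_cons_of_mem (Multiset.mem_cons_of_mem
              (Multiset.mem_cons_of_mem (Multiset.mem_add.mpr (Or.inr hx))))
        refine REST p'.size ?_ _ ?_ p' hp'L le_rfl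
          (B ::ₘ D ::ₘ (B.conj D) ::ₘ (Sg + Δ.erase (B.conj D))) ?_
        · simp only [IGProof.size, IGProof.size_castC] at hp's
          omega
        · intro Y hY
          rcases Multiset.mem_add.mp hY with hY | hY
          · rcases Multiset.mem_add.mp hY with hY | hY
            · rcases Multiset.mem_cons.mp hY with h | hY
              · rw [h]; exact hDB
              · have h := Multiset.mem_singleton.mp hY
                rw [h]; exact hDD
            · exact hVD Y hY
          · exact hDr Y hY
        · intro y hy
          rcases Multiset.mem_add.mp hy with hy | hy
          · rcases Multiset.mem_add.mp hy with hy | hy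
            · rcases Multiset.mem_cons.mp hy with h | hy
              · exact ⟨B, Multiset.mem_cons_self _ _, by rw [h]; exact Fm.ge.refl B⟩
              · have h := Multiset.mem_singleton.mp hy
                exact ⟨D, Multiset.mem_cons_of_mem (Multiset.mem_cons_self _ _),
                  by rw [h]; exact Fm.ge.refl D⟩
            · exact hrel y (hVC y hy)
          · exact hrel y (hCovR y hy)
      have := expand base F'.sizeF F' le_rfl hF 0
      rwa [zero_add] at this
  | @allL B Γ₀ _ t q₀ =>
      intro hqL hqs hD hF Δ hCov hCovR K
      simp only [IGProof.orLCount] at hqL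
      simp only [IGProof.size] at hqs
      have hq₀pos := q₀.size_pos
      obtain ⟨X, hXΔ, hge⟩ := hCov (Fm.all B) (Multiset.mem_cons_self _ _)
      obtain rfl := Fm.ge_all hge
      have hDall : DFm (Fm.all B) := hD _ (Multiset.mem_cons_self _ _)
      have hDB : DFm B := by cases hDall; assumption
      have hΔ : (Fm.all B) ::ₘ Δ.erase (Fm.all B) = Δ := Multiset.cons_erase hXΔ
      have base : ∀ (Sg : Multiset Fm) (F₀ : Fm), F₀.neutral → UP G (Sg + Δ) F₀ := by
        intro Sg F₀ hF₀
        rw [show Sg + Δ = (Fm.all B) ::ₘ (Sg + Δ.erase (Fm.all B)) by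
          conv_lhs => rw [← hΔ, Multiset.add_cons]]
        apply UP.allL hF₀ t
        apply UP.resG hF₀
        obtain ⟨V, p', hp'L, hp's, hVD, hVC⟩ := K {B.inst t}
          (q₀.castC ((Multiset.singleton_add _ _).symm))
          (by rw [IGProof.orLCount_castC]; exact hqL)
        have hrel : ∀ y : Fm, (∃ x ∈ Δ, Fm.ge x y) →
            ∃ x ∈ (B.inst t) ::ₘ (Fm.all B) ::ₘ (Sg + Δ.erase (Fm.all B)), Fm.ge x y := by
          rintro y ⟨x, hx, hgex⟩
          refine ⟨x, ?_, hgex⟩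
          rw [← hΔ] at hx
          rcases Multiset.mem_cons.mp hx with h | hx
          · rw [h]; exact Multiset.mem_cons_of_mem (Multiset.mem_cons_self _ _)
          · exact Multiset.mem_cons_of_mem (Multiset.mem_cons_of_mem
              (Multiset.mem_add.mpr (Or.inr hx)))
        refine REST p'.size ?_ _ ?_ p' hp'L le_rfl
          ((B.inst t) ::ₘ (Fm.all B) ::ₘ (Sg + Δ.erase (Fm.all B))) ?_
        · simp only [IGProof.size, IGProof.size_castC] at hp's
          omega
        · intro Y hY
          rcases Multiset.mem_add.mp hY with hY | hY
          · rcases Multiset.mem_add.mp hY with hY | hY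
            · have h := Multiset.mem_singleton.mp hY
              rw [h]; exact hDB.inst t
            · exact hVD Y hY
          · exact hDr Y hY
        · intro y hy
          rcases Multiset.mem_add.mp hy with hy | hy
          · rcases Multiset.mem_add.mp hy with hy | hy
            · have h := Multiset.mem_singleton.mp hy
              exact ⟨B.inst t, Multiset.mem_cons_self _ _, by rw [h]; exact Fm.ge.refl _⟩
            · exact hrel y (hVC y hy)
          · exact hrel y (hCovR y hy)
      have := expand base F'.sizeF F' le_rfl hF 0
      rwa [zero_add] at this
  | @impL B D Γ₀ _ q₁ q₂ =>
      intro hqL hqs hD hF Δ hCov hCovR K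
      simp only [IGProof.orLCount] at hqL
      simp only [IGProof.size] at hqs
      have h1pos := q₁.size_pos; have h2pos := q₂.size_pos
      have hqL1 : q₁.orLCount = 0 := by omega
      have hqL2 : q₂.orLCount = 0 := by omega
      have hDimp : DFm (B.imp D) := hD _ (Multiset.mem_cons_self _ _)
      have hGB : GFm B := by cases hDimp; assumption
      have hDD : DFm D := by cases hDimp; assumption
      obtain ⟨X, hXΔ, hge⟩ := hCov (B.imp D) (Multiset.mem_cons_self _ _)
      rcases Fm.ge_imp hge with rfl | hgeD
      · have hΔ : (B.imp D) ::ₘ Δ.erase (B.imp D) = Δ := Multiset.cons_erase hXΔ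
        have base : ∀ (Sg : Multiset Fm) (F₀ : Fm), F₀.neutral → UP G (Sg + Δ) F₀ := by
          intro Sg F₀ hF₀
          have hrel : ∀ (Λ : Multiset Fm) (y : Fm), (∃ x ∈ Δ, Fm.ge x y) →
              ∃ x ∈ (B.imp D) ::ₘ (Λ + Δ.erase (B.imp D)), Fm.ge x y := by
            rintro Λ y ⟨x, hx, hgex⟩
            refine ⟨x, ?_, hgex⟩
            rw [← hΔ] at hx
            rcases Multiset.mem_cons.mp hx with h | hx
            · rw [h]; exact Multiset.mem_cons_self _ _
            · exact Multiset.mem_cons_of_mem (Multiset.mem_add.mpr (Or.inr hx))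
          rw [show Sg + Δ = (B.imp D) ::ₘ (Sg + Δ.erase (B.imp D)) by
            conv_lhs => rw [← hΔ, Multiset.add_cons]]
          apply UP.impL hF₀
          · refine IHs (s - 1) (by omega) _ _ q₁ hqL1 (by omega) hD hGB _ ?_ ?_ ?_
            · intro y hy
              rcases Multiset.mem_cons.mp hy with h | hy
              · exact ⟨B.imp D, Multiset.mem_cons_self _ _, by rw [h]; exact Fm.ge.refl _⟩
              · exact hrel Sg y (hCov y (Multiset.mem_cons_of_mem hy))
            · intro y hy
              exact hrel Sg y (hCovR y hy)
            · refine KTy.mono (Δ := Δ) ?_ ?_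
              rotate_left
              · intro x hx
                rw [← hΔ] at hx
                rcases Multiset.mem_cons.mp hx with h | hx
                · rw [h]; exact Multiset.mem_cons_self _ _
                · exact Multiset.mem_cons_of_mem (Multiset.mem_add.mpr (Or.inr hx))
              intro W r hrL
              obtain ⟨w₂, hw₂L, hw₂s⟩ := IGProof.wkEx q₂.size q₂ le_rfl hqL2 W
                (Γ' := D ::ₘ (W + Γ₀)) (by rw [Multiset.add_cons])
              obtain ⟨V, p', hp'L, hp's, hVD, hVC⟩ := K W
                (((r.castC (show W + ((B.imp D) ::ₘ Γ₀) = (B.imp D) ::ₘ (W + Γ₀) by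
                    rw [Multiset.add_cons])).impL w₂).castC
                  (show (B.imp D) ::ₘ (W + Γ₀) = W + ((B.imp D) ::ₘ Γ₀) by
                    rw [Multiset.add_cons]))
                (by simp [IGProof.orLCount]; omega)
              refine ⟨V, p', hp'L, ?_, hVD, hVC⟩
              simp only [IGProof.size, IGProof.size_castC] at hp's ⊢
              omega
          · apply UP.resG hF₀
            obtain ⟨w₂, hw₂L, hw₂s⟩ := IGProof.wkEx q₂.size q₂ le_rfl hqL2 {B.imp D}
              (Γ' := D ::ₘ (B.imp D) ::ₘ Γ₀)
              (by rw [Multiset.singleton_add, Multiset.cons_swap])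
            obtain ⟨V, p', hp'L, hp's, hVD, hVC⟩ := K {D}
              (w₂.castC ((Multiset.singleton_add _ _).symm)) (by rw [IGProof.orLCount_castC]; exact hw₂L)
            have hrel2 : ∀ y : Fm, (∃ x ∈ Δ, Fm.ge x y) →
                ∃ x ∈ D ::ₘ (Sg + Δ.erase (B.imp D)), Fm.ge x y := by
              rintro y ⟨x, hx, hgex⟩
              rw [← hΔ] at hx
              rcases Multiset.mem_cons.mp hx with h | hx
              · refine ⟨D, Multiset.mem_cons_self _ _,
                  Fm.ge_trans (show Fm.ge D (B.imp D) from Fm.ge.imp (Fm.ge.refl D)) ?_⟩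
                rw [← h]; exact hgex
              · exact ⟨x, Multiset.mem_cons_of_mem (Multiset.mem_add.mpr (Or.inr hx)), hgex⟩
            refine REST p'.size ?_ _ ?_ p' hp'L le_rfl (D ::ₘ (Sg + Δ.erase (B.imp D))) ?_
            · simp only [IGProof.size, IGProof.size_castC] at hp's
              omega
            · intro Y hY
              rcases Multiset.mem_add.mp hY with hY | hY
              · rcases Multiset.mem_add.mp hY with hY | hY
                · have h := Multiset.mem_singleton.mp hY
                  rw [h]; exact hDD
                · exact hVD Y hY
              · exact hDr Y hY
            · intro y hy
              rcases Multiset.mem_add.mp hy with hy | hy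
              · rcases Multiset.mem_add.mp hy with hy | hy
                · have h := Multiset.mem_singleton.mp hy
                  exact ⟨D, Multiset.mem_cons_self _ _, by rw [h]; exact Fm.ge.refl _⟩
                · exact hrel2 y (hVC y hy)
              · exact hrel2 y (hCovR y hy)
        have := expand base F'.sizeF F' le_rfl hF 0
        rwa [zero_add] at this
      · refine IHs (s - 1) (by omega) _ _ q₂ hqL2 (by omega) ?_ hF Δ ?_ hCovR ?_
        · intro Y hY
          rcases Multiset.mem_cons.mp hY with h | hY
          · rw [h]; exact hDD
          · exact hD Y (Multiset.mem_cons_of_mem hY)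
        · intro y hy
          rcases Multiset.mem_cons.mp hy with h | hy
          · exact ⟨X, hXΔ, by rw [h]; exact hgeD⟩
          · exact hCov y (Multiset.mem_cons_of_mem hy)
        · intro W r hrL
          obtain ⟨w₁, hw₁L, hw₁s⟩ := IGProof.wkEx q₁.size q₁ le_rfl hqL1 W
            (Γ' := (B.imp D) ::ₘ (W + Γ₀)) (by rw [Multiset.add_cons])
          obtain ⟨V, p', hp'L, hp's, hVD, hVC⟩ := K W
            ((w₁.impL (r.castC (show W + (D ::ₘ Γ₀) = D ::ₘ (W + Γ₀) by
                rw [Multiset.add_cons]))).castC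
              (show (B.imp D) ::ₘ (W + Γ₀) = W + ((B.imp D) ::ₘ Γ₀) by
                rw [Multiset.add_cons]))
            (by simp [IGProof.orLCount]; omega)
          refine ⟨V, p', hp'L, ?_, hVD, hVC⟩
          simp only [IGProof.size, IGProof.size_castC] at hp's ⊢
          omega
  | @orLG B D Γ₀ _ q₁ q₂ =>
      intro hqL hqs hD hF Δ hCov hCovR K
      simp only [IGProof.orLCount] at hqL
      simp only [IGProof.size] at hqs
      have h1pos := q₁.size_pos; have h2pos := q₂.size_pos
      have hqL1 : q₁.orLCount = 0 := by omega
      have hqL2 : q₂.orLCount = 0 := by omega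
      have hDdsj : DFm (B.disj D) := hD _ (Multiset.mem_cons_self _ _)
      have hDB : DFm B := by cases hDdsj; assumption
      have hDD : DFm D := by cases hDdsj; assumption
      obtain ⟨X, hXΔ, hge⟩ := hCov (B.disj D) (Multiset.mem_cons_self _ _)
      rcases Fm.ge_disj hge with rfl | hgeB | hgeD
      · have hΔ : (B.disj D) ::ₘ Δ.erase (B.disj D) = Δ := Multiset.cons_erase hXΔ
        have base : ∀ (Sg : Multiset Fm) (F₀ : Fm), F₀.neutral → UP G (Sg + Δ) F₀ := by
          intro Sg F₀ hF₀
          rw [show Sg + Δ = (B.disj D) ::ₘ (Sg + Δ.erase (B.disj D)) by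
            conv_lhs => rw [← hΔ, Multiset.add_cons]]
          apply UP.orLG hF₀
          · apply UP.resG hF₀
            obtain ⟨w₁, hw₁L, hw₁s⟩ := IGProof.wkEx q₁.size q₁ le_rfl hqL1 {B.disj D}
              (Γ' := B ::ₘ (B.disj D) ::ₘ Γ₀)
              (by rw [Multiset.singleton_add, Multiset.cons_swap])
            obtain ⟨V, p₁, hp₁L, hp₁s, hVD, hVC⟩ := K {B}
              (w₁.castC ((Multiset.singleton_add _ _).symm)) (by rw [IGProof.orLCount_castC]; exact hw₁L)
            have hrel : ∀ y : Fm, (∃ x ∈ Δ, Fm.ge x y) →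
                ∃ x ∈ B ::ₘ (Sg + Δ.erase (B.disj D)), Fm.ge x y := by
              rintro y ⟨x, hx, hgex⟩
              rw [← hΔ] at hx
              rcases Multiset.mem_cons.mp hx with h | hx
              · refine ⟨B, Multiset.mem_cons_self _ _,
                  Fm.ge_trans (show Fm.ge B (B.disj D) from Fm.ge.disjl (Fm.ge.refl B)) ?_⟩
                rw [← h]; exact hgex
              · exact ⟨x, Multiset.mem_cons_of_mem (Multiset.mem_add.mpr (Or.inr hx)), hgex⟩
            refine REST p₁.size ?_ _ ?_ p₁ hp₁L le_rfl (B ::ₘ (Sg + Δ.erase (B.disj D))) ?_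
            · simp only [IGProof.size, IGProof.size_castC] at hp₁s
              omega
            · intro Y hY
              rcases Multiset.mem_add.mp hY with hY | hY
              · rcases Multiset.mem_add.mp hY with hY | hY
                · have h := Multiset.mem_singleton.mp hY
                  rw [h]; exact hDB
                · exact hVD Y hY
              · exact hDr Y hY
            · intro y hy
              rcases Multiset.mem_add.mp hy with hy | hy
              · rcases Multiset.mem_add.mp hy with hy | hy
                · have h := Multiset.mem_singleton.mp hy
                  exact ⟨B, Multiset.mem_cons_self _ _, by rw [h]; exact Fm.ge.refl _⟩
                · exact hrel y (hVC y hy)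
              · exact hrel y (hCovR y hy)
          · obtain ⟨w₂, hw₂L, hw₂s⟩ := IGProof.wkEx q₂.size q₂ le_rfl hqL2 {B.disj D}
              (Γ' := D ::ₘ (B.disj D) ::ₘ Γ₀)
              (by rw [Multiset.singleton_add, Multiset.cons_swap])
            obtain ⟨V, p₂, hp₂L, hp₂s, hVD, hVC⟩ := K {D}
              ((w₂.castC ((Multiset.singleton_add _ _).symm)).resG)
              (by simp only [IGProof.orLCount, IGProof.orLCount_castC]; exact hw₂L)
            have hrel : ∀ y : Fm, (∃ x ∈ Δ, Fm.ge x y) →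
                ∃ x ∈ D ::ₘ (Sg + Δ.erase (B.disj D)), Fm.ge x y := by
              rintro y ⟨x, hx, hgex⟩
              rw [← hΔ] at hx
              rcases Multiset.mem_cons.mp hx with h | hx
              · refine ⟨D, Multiset.mem_cons_self _ _,
                  Fm.ge_trans (show Fm.ge D (B.disj D) from Fm.ge.disjr (Fm.ge.refl D)) ?_⟩
                rw [← h]; exact hgex
              · exact ⟨x, Multiset.mem_cons_of_mem (Multiset.mem_add.mpr (Or.inr hx)), hgex⟩
            refine REST p₂.size ?_ _ ?_ p₂ hp₂L le_rfl (D ::ₘ (Sg + Δ.erase (B.disj D))) ?_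
            · simp only [IGProof.size, IGProof.size_castC] at hp₂s
              omega
            · intro Y hY
              rcases Multiset.mem_add.mp hY with hY | hY
              · rcases Multiset.mem_add.mp hY with hY | hY
                · have h := Multiset.mem_singleton.mp hY
                  rw [h]; exact hDD
                · exact hVD Y hY
              · exact hDr Y hY
            · intro y hy
              rcases Multiset.mem_add.mp hy with hy | hy
              · rcases Multiset.mem_add.mp hy with hy | hy
                · have h := Multiset.mem_singleton.mp hy
                  exact ⟨D, Multiset.mem_cons_self _ _, by rw [h]; exact Fm.ge.refl _⟩
                · exact hrel y (hVC y hy)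
              · exact hrel y (hCovR y hy)
        have := expand base F'.sizeF F' le_rfl hF 0
        rwa [zero_add] at this
      · refine IHs (s - 1) (by omega) _ _ q₁ hqL1 (by omega) ?_ hF Δ ?_ hCovR ?_
        · intro Y hY
          rcases Multiset.mem_cons.mp hY with h | hY
          · rw [h]; exact hDB
          · exact hD Y (Multiset.mem_cons_of_mem hY)
        · intro y hy
          rcases Multiset.mem_cons.mp hy with h | hy
          · exact ⟨X, hXΔ, by rw [h]; exact hgeB⟩
          · exact hCov y (Multiset.mem_cons_of_mem hy)
        · intro W r hrL
          obtain ⟨w₂, hw₂L, hw₂s⟩ := IGProof.wkEx q₂.size q₂ le_rfl hqL2 W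
            (Γ' := D ::ₘ (W + Γ₀)) (by rw [Multiset.add_cons])
          obtain ⟨V, p', hp'L, hp's, hVD, hVC⟩ := K W
            (((r.castC (show W + (B ::ₘ Γ₀) = B ::ₘ (W + Γ₀) by
                rw [Multiset.add_cons])).orLG w₂).castC
              (show (B.disj D) ::ₘ (W + Γ₀) = W + ((B.disj D) ::ₘ Γ₀) by
                rw [Multiset.add_cons]))
            (by simp [IGProof.orLCount]; omega)
          refine ⟨V, p', hp'L, ?_, hVD, hVC⟩
          simp only [IGProof.size, IGProof.size_castC] at hp's ⊢
          omega
      · have base : ∀ (Sg : Multiset Fm) (F₀ : Fm), F₀.neutral → UP G (Sg + Δ) F₀ := by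
          intro Sg F₀ hF₀
          apply UP.resG hF₀
          refine IHs (s - 1) (by omega) _ _ q₂ hqL2 (by omega) ?_ hGG (Sg + Δ) ?_
            (Cov.addL Sg hCovR) ?_
          · intro Y hY
            rcases Multiset.mem_cons.mp hY with h | hY
            · rw [h]; exact hDD
            · exact hD Y (Multiset.mem_cons_of_mem hY)
          · intro y hy
            rcases Multiset.mem_cons.mp hy with h | hy
            · exact ⟨X, Multiset.mem_add.mpr (Or.inr hXΔ), by rw [h]; exact hgeD⟩
            · exact Cov.addL Sg hCov y (Multiset.mem_cons_of_mem hy)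
          · refine KTy.mono ?_ (fun x hx => Multiset.mem_add.mpr (Or.inr hx))
            intro W r hrL
            obtain ⟨w₁, hw₁L, hw₁s⟩ := IGProof.wkEx q₁.size q₁ le_rfl hqL1 W
              (Γ' := B ::ₘ (W + Γ₀)) (by rw [Multiset.add_cons])
            obtain ⟨V, p', hp'L, hp's, hVD, hVC⟩ := K W
              ((w₁.orLG (r.castC (show W + (D ::ₘ Γ₀) = D ::ₘ (W + Γ₀) by
                  rw [Multiset.add_cons]))).castC
                (show (B.disj D) ::ₘ (W + Γ₀) = W + ((B.disj D) ::ₘ Γ₀) by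
                  rw [Multiset.add_cons]))
              (by simp [IGProof.orLCount]; omega)
            refine ⟨V, p', hp'L, ?_, hVD, hVC⟩
            simp only [IGProof.size, IGProof.size_castC] at hp's ⊢
            omega
        have := expand base F'.sizeF F' le_rfl hF 0
        rwa [zero_add] at this
  | @exL B Γ₀ _ c hc hGc q₀ =>
      intro hqL hqs hD hF Δ hCov hCovR K
      simp only [IGProof.orLCount] at hqL
      simp only [IGProof.size] at hqs
      have hq₀pos := q₀.size_pos
      have hDex : DFm (Fm.ex B) := hD _ (Multiset.mem_cons_self _ _)
      have hDB : DFm B := by cases hDex; assumption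
      have hcB : ¬ B.constIn c := by
        have := hc.1 (Fm.ex B) (Multiset.mem_cons_self _ _)
        simpa [Fm.constIn] using this
      have hcΓ : ∀ X ∈ Γ₀, ¬ X.constIn c := fun X hX => hc.1 X (Multiset.mem_cons_of_mem hX)
      have hcF : ¬ F'.constIn c := hc.2 F' (Multiset.mem_singleton_self _)
      obtain ⟨X, hXΔ, hge⟩ := hCov (Fm.ex B) (Multiset.mem_cons_self _ _)
      rcases Fm.ge_ex hge with rfl | ⟨d, hged⟩
      · have hΔ : (Fm.ex B) ::ₘ Δ.erase (Fm.ex B) = Δ := Multiset.cons_erase hXΔ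
        have base : ∀ (Sg : Multiset Fm) (F₀ : Fm), F₀.neutral → UP G (Sg + Δ) F₀ := by
          intro Sg F₀ hF₀
          rw [show Sg + Δ = (Fm.ex B) ::ₘ (Sg + Δ.erase (Fm.ex B)) by
            conv_lhs => rw [← hΔ, Multiset.add_cons]]
          obtain ⟨c'', hc''⟩ := exists_fresh
            (B.consts ∪ MC Γ₀ ∪ MC Sg ∪ MC Δ ∪ F₀.consts ∪ G.consts)
          simp only [Finset.mem_union, not_or] at hc''
          obtain ⟨⟨⟨⟨⟨h1, h2⟩, h3⟩, h4⟩, h5⟩, h6⟩ := hc''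
          refine UP.exL hF₀ c'' ⟨?_, ?_⟩ (fun h => h6 (by rwa [← Fm.constIn_iff_mem])) ?_
          · intro Y hY
            rcases Multiset.mem_cons.mp hY with h | hY
            · rw [h]
              simp only [Fm.constIn]
              rw [Fm.constIn_iff_mem]
              exact h1
            · rcases Multiset.mem_add.mp hY with hY | hY
              · exact not_constIn_of_notMem_MC hY h3
              · exact not_constIn_of_notMem_MC (Multiset.mem_of_mem_erase hY) h4
          · intro Y hY
            rw [Multiset.mem_singleton.mp hY, Fm.constIn_iff_mem]
            exact h5
          · apply UP.resG hF₀
            obtain ⟨q₁, hq₁L, hq₁s⟩ := IGProof.renEx q₀.size q₀ le_rfl hqL c c'' hGc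
              (Γ' := (B.inst (Tm.const c'')) ::ₘ Γ₀)
              (by rw [Multiset.map_cons, Fm.ren_inst, map_ren_eq_self c'' hcΓ,
                Fm.ren_eq_self c'' (by rwa [← Fm.constIn_iff_mem]),
                show Tm.ren c c'' (Tm.const c) = Tm.const c'' by simp [Tm.ren]])
              (Fm.ren_eq_self c'' (by rwa [← Fm.constIn_iff_mem]))
            obtain ⟨w₁, hw₁L, hw₁s⟩ := IGProof.wkEx q₁.size q₁ le_rfl hq₁L {Fm.ex B}
              (Γ' := (B.inst (Tm.const c'')) ::ₘ (Fm.ex B) ::ₘ Γ₀)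
              (by rw [Multiset.singleton_add, Multiset.cons_swap])
            obtain ⟨V, p', hp'L, hp's, hVD, hVC⟩ := K {B.inst (Tm.const c'')}
              (w₁.castC ((Multiset.singleton_add _ _).symm)) (by rw [IGProof.orLCount_castC]; exact hw₁L)
            have hrel : ∀ y : Fm, (∃ x ∈ Δ, Fm.ge x y) →
                ∃ x ∈ (B.inst (Tm.const c'')) ::ₘ (Sg + Δ.erase (Fm.ex B)), Fm.ge x y := by
              rintro y ⟨x, hx, hgex⟩
              rw [← hΔ] at hx
              rcases Multiset.mem_cons.mp hx with h | hx
              · refine ⟨B.inst (Tm.const c''), Multiset.mem_cons_self _ _,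
                  Fm.ge_trans (ge_inst_ex c'' B) ?_⟩
                rw [← h]; exact hgex
              · exact ⟨x, Multiset.mem_cons_of_mem (Multiset.mem_add.mpr (Or.inr hx)), hgex⟩
            refine REST p'.size ?_ _ ?_ p' hp'L le_rfl
              ((B.inst (Tm.const c'')) ::ₘ (Sg + Δ.erase (Fm.ex B))) ?_
            · simp only [IGProof.size, IGProof.size_castC] at hp's
              omega
            · intro Y hY
              rcases Multiset.mem_add.mp hY with hY | hY
              · rcases Multiset.mem_add.mp hY with hY | hY
                · have h := Multiset.mem_singleton.mp hY
                  rw [h]; exact hDB.inst _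
                · exact hVD Y hY
              · exact hDr Y hY
            · intro y hy
              rcases Multiset.mem_add.mp hy with hy | hy
              · rcases Multiset.mem_add.mp hy with hy | hy
                · have h := Multiset.mem_singleton.mp hy
                  exact ⟨B.inst (Tm.const c''), Multiset.mem_cons_self _ _,
                    by rw [h]; exact Fm.ge.refl _⟩
                · exact hrel y (hVC y hy)
              · exact hrel y (hCovR y hy)
        have := expand base F'.sizeF F' le_rfl hF 0
        rwa [zero_add] at this
      · obtain ⟨q₁, hq₁L, hq₁s⟩ := IGProof.renEx q₀.size q₀ le_rfl hqL c d hGc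
          (Γ' := (B.inst (Tm.const d)) ::ₘ Γ₀)
          (by rw [Multiset.map_cons, Fm.ren_inst, map_ren_eq_self d hcΓ,
            Fm.ren_eq_self d (by rwa [← Fm.constIn_iff_mem]),
            show Tm.ren c d (Tm.const c) = Tm.const d by simp [Tm.ren]])
          (Fm.ren_eq_self d (by rwa [← Fm.constIn_iff_mem]))
        refine IHs (s - 1) (by omega) _ _ q₁ hq₁L (by omega) ?_ hF Δ ?_ hCovR ?_
        · intro Y hY
          rcases Multiset.mem_cons.mp hY with h | hY
          · rw [h]; exact hDB.inst _
          · exact hD Y (Multiset.mem_cons_of_mem hY)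
        · intro y hy
          rcases Multiset.mem_cons.mp hy with h | hy
          · exact ⟨X, hXΔ, by rw [h]; exact hged⟩
          · exact hCov y (Multiset.mem_cons_of_mem hy)
        · intro W r hrL
          obtain ⟨w₁, hw₁L, hw₁s⟩ := IGProof.wkEx r.size r le_rfl hrL {Fm.ex B}
            (Γ' := (Fm.ex B) ::ₘ (B.inst (Tm.const d)) ::ₘ (W + Γ₀))
            (by rw [Multiset.singleton_add, Multiset.add_cons])
          obtain ⟨V, p', hp'L, hp's, hVD, hVC⟩ := K ((B.inst (Tm.const d)) ::ₘ W)
            (w₁.castC (show (Fm.ex B) ::ₘ (B.inst (Tm.const d)) ::ₘ (W + Γ₀)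
                = ((B.inst (Tm.const d)) ::ₘ W) + ((Fm.ex B) ::ₘ Γ₀) by
              rw [Multiset.cons_add, Multiset.add_cons, Multiset.cons_swap]))
            (by simpa using hw₁L)
          refine ⟨(B.inst (Tm.const d)) ::ₘ V,
            p'.castC (show ((B.inst (Tm.const d)) ::ₘ W) + V + Γr
                = W + ((B.inst (Tm.const d)) ::ₘ V) + Γr by
              rw [Multiset.cons_add, Multiset.add_cons]), by simpa using hp'L, ?_, ?_, ?_⟩
          · simp only [IGProof.size, IGProof.size_castC] at hp's ⊢
            omega
          · intro Y hY
            rcases Multiset.mem_cons.mp hY with h | hY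
            · rw [h]; exact hDB.inst _
            · exact hVD Y hY
          · intro Y hY
            rcases Multiset.mem_cons.mp hY with h | hY
            · exact ⟨X, hXΔ, by rw [h]; exact hged⟩
            · exact hVC Y hY

lemma mainThm {G : Fm} (hGG : GFm G) :
    ∀ (N : ℕ) (Γr : Multiset Fm), (∀ X ∈ Γr, DFm X) →
    ∀ (pr : IGProof G Γr G), pr.orLCount = 0 → pr.size ≤ N →
    ∀ Δ, Cov Δ Γr → UP G Δ G := by
  intro N
  induction N using Nat.strong_induction_on with
  | _ N IHN =>
  intro Γr hDr pr hL hs Δ hCov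
  refine inner hGG Γr hDr N ?_ pr.size Γr G pr hL le_rfl hDr hGG Δ hCov hCov ?_
  · intro m hm Γ2 hD2 p2 hL2 hs2 Δ2 hC2
    exact IHN m hm Γ2 hD2 p2 hL2 hs2 Δ2 hC2
  · intro W r hrL
    refine ⟨0, r.castC (show W + Γr = (W + 0) + Γr by rw [add_zero]),
      by simpa using hrL, ?_, ?_, ?_⟩
    · simp only [IGProof.size_castC]
      omega
    · intro Y hY
      exact absurd hY (Multiset.notMem_zero Y)
    · intro Y hY
      exact absurd hY (Multiset.notMem_zero Y)
/-- Lemma `secondmodified`: let `G` be a G-formula and `Γ`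
a multiset of D-formulas. If `Γ → G` has an I_G-proof containing no
occurrences of the ∨-L rule, then it has an O_G-proof. -/
theorem statement_15 (Γ : Multiset Fm) (G : Fm) (hΓ : ∀ X ∈ Γ, DFm X) (hG : GFm G)
    (p : IGProof G Γ G) (hp : p.orLCount = 0) :
    ∃ q : IGProof G Γ G, q.isOG := by
  exact mainThm hG p.size Γ hΓ p hp le_rfl Γ (Cov.refl Γ)
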